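/- arXiv:math/0403453 — 2 statements merged into one kernel-verified Lean document; each statement's English description precedes it below -/
import Mathlib

section
/- Let (X,𝓑,μ,T) be any (not necessarily invertible) measure preserving probability system and A ∈ 𝓑. Then there exists an invertible strongly stationary system (X̃,𝓑̃,μ̃,T̃) — which may be taken to be the shift on {0,1}^ℤ with a strongly stationary measure — and a set B̃ ∈ 𝓑̃ such that μ(A) = μ̃(B̃) and for every k ∈ ℕ, sup_{n∈ℕ} μ(⋂_{i=0}^{k} T^{-in}A) ≥ sup_{n∈ℕ} μ̃(⋂_{i=0}^{k} T̃^{-in}B̃). -/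
open MeasureTheory Filter Set

noncomputable section

/-- The shift `S` on the sequence space `Λ^ℤ`, `(S x) k = x (k+1)`. -/
def shiftMap {Λ : Type*} (x : ℤ → Λ) : ℤ → Λ := fun k => x (k + 1)

/-- The dilation map `τ_n`, `(τ_n x) i = x (n * i)`. -/
def dilMap {Λ : Type*} (n : ℕ) (x : ℤ → Λ) : ℤ → Λ := fun i => x ((n : ℤ) * i)

/-- A measure on the sequence space `Λ^ℤ` is *strongly stationary* if it is invariant
under the shift `S` and under every dilation `τ_n`, `n ≥ 1`. -/
def IsStronglyStationary {Λ : Type*} [MeasurableSpace Λ] (ν : Measure (ℤ → Λ)) : Prop :=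
  MeasurePreserving shiftMap ν ν ∧ ∀ n : ℕ, 0 < n → MeasurePreserving (dilMap n) ν ν

/-- `C` depends only on coordinates in the window `[-r, r]`. -/
def Deps (C : Set (ℤ → Bool)) (r : ℕ) : Prop :=
  ∀ ⦃x y : ℤ → Bool⦄, (∀ i : ℤ, |i| ≤ (r : ℤ) → x i = y i) → x ∈ C → y ∈ C

namespace Deps

lemma mem_iff {C : Set (ℤ → Bool)} {r : ℕ} (h : Deps C r) {x y : ℤ → Bool}
    (hxy : ∀ i : ℤ, |i| ≤ (r : ℤ) → x i = y i) : x ∈ C ↔ y ∈ C :=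
  ⟨fun hx => h hxy hx, fun hy => h (fun i hi => (hxy i hi).symm) hy⟩

lemma mono {C : Set (ℤ → Bool)} {r s : ℕ} (h : Deps C r) (hrs : r ≤ s) : Deps C s :=
  fun _ _ hxy hx => h (fun i hi => hxy i (hi.trans (by exact_mod_cast hrs))) hx

lemma compl {C : Set (ℤ → Bool)} {r : ℕ} (h : Deps C r) : Deps Cᶜ r := by
  intro x y hxy hx hyC
  exact hx (h (fun i hi => (hxy i hi).symm) hyC)

lemma isOpen {C : Set (ℤ → Bool)} {r : ℕ} (h : Deps C r) : IsOpen C := by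
  rw [isOpen_iff_mem_nhds]
  intro x hx
  have hmem : (⋂ i ∈ Finset.Icc (-(r : ℤ)) (r : ℤ), {y : ℤ → Bool | y i = x i}) ∈ nhds x := by
    refine Filter.biInter_finset_mem _ |>.mpr fun i _ => ?_
    have ho : IsOpen {y : ℤ → Bool | y i = x i} := by
      have : {y : ℤ → Bool | y i = x i} = (fun p : ℤ → Bool => p i) ⁻¹' {x i} := rfl
      rw [this]
      exact (isOpen_discrete _).preimage (continuous_apply i)
    exact ho.mem_nhds rfl
  refine Filter.mem_of_superset hmem fun y hy => ?_
  refine h (fun i hi => ?_) hx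
  have := Set.mem_iInter₂.mp hy i (by rw [Finset.mem_Icc]; exact abs_le.mp hi)
  exact this.symm

lemma isClopen {C : Set (ℤ → Bool)} {r : ℕ} (h : Deps C r) : IsClopen C :=
  ⟨by simpa using h.compl.isOpen.isClosed_compl, h.isOpen⟩

lemma measurableSet {C : Set (ℤ → Bool)} {r : ℕ} (h : Deps C r) : MeasurableSet C := by
  classical
  set I := Finset.Icc (-(r : ℤ)) (r : ℤ) with hI
  set π : (ℤ → Bool) → (I → Bool) := fun x i => x i with hπdef
  have hπ : Measurable π := measurable_pi_lambda _ fun i => measurable_pi_apply _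
  have hCeq : C = π ⁻¹' (π '' C) := by
    apply Set.Subset.antisymm (Set.subset_preimage_image _ _)
    rintro x ⟨y, hyC, hyx⟩
    refine h (fun i hi => ?_) hyC
    exact congrFun hyx ⟨i, by rw [hI, Finset.mem_Icc]; exact abs_le.mp hi⟩
  rw [hCeq]
  exact hπ (Set.Finite.measurableSet (Set.toFinite _))

end Deps

lemma cylinder_subset_of_isOpen {C : Set (ℤ → Bool)} (hC : IsOpen C) {x : ℤ → Bool} (hx : x ∈ C) :
    ∃ r : ℕ, ∀ y : ℤ → Bool, (∀ i : ℤ, |i| ≤ (r : ℤ) → y i = x i) → y ∈ C := by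
  obtain ⟨I, u, hu, hsub⟩ := isOpen_pi_iff.mp hC x hx
  refine ⟨I.sup Int.natAbs, fun y hy => hsub ?_⟩
  intro a ha
  have hya : y a = x a := by
    refine hy a ?_
    rw [Int.abs_eq_natAbs]
    exact_mod_cast Finset.le_sup (f := Int.natAbs) ha
  rw [hya]
  exact (hu a ha).2

lemma exists_deps_of_isClopen {C : Set (ℤ → Bool)} (hC : IsClopen C) : ∃ r, Deps C r := by
  set V : ℕ → Set (ℤ → Bool) :=
    fun r => {x | ∀ y : ℤ → Bool, (∀ i : ℤ, |i| ≤ (r : ℤ) → y i = x i) → (y ∈ C ↔ x ∈ C)} with hV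
  have hVdeps : ∀ r, Deps (V r) r := by
    intro r x x' hxx' hx
    intro y hyx'
    have h1 : y ∈ C ↔ x ∈ C := hx y fun i hi => (hyx' i hi).trans (hxx' i hi).symm
    have h2 : x' ∈ C ↔ x ∈ C := hx x' fun i hi => (hxx' i hi).symm
    rw [h1, h2]
  have hVmono : ∀ {r s : ℕ}, r ≤ s → V r ⊆ V s := by
    intro r s hrs x hx y hyx
    exact hx y fun i hi => hyx i (hi.trans (by exact_mod_cast hrs))
  have hcover : (Set.univ : Set (ℤ → Bool)) ⊆ ⋃ r, V r := by
    intro x _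
    by_cases hx : x ∈ C
    · obtain ⟨r, hr⟩ := cylinder_subset_of_isOpen hC.isOpen hx
      exact Set.mem_iUnion.mpr ⟨r, fun y hy => iff_of_true (hr y hy) hx⟩
    · obtain ⟨r, hr⟩ := cylinder_subset_of_isOpen hC.compl.isOpen hx
      exact Set.mem_iUnion.mpr ⟨r, fun y hy => iff_of_false (hr y hy) hx⟩
  obtain ⟨t, ht⟩ := isCompact_univ.elim_finite_subcover V (fun r => (hVdeps r).isOpen) hcover
  refine ⟨t.sup id, ?_⟩
  intro x y hxy hx
  have hxV : x ∈ V (t.sup id) := by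
    obtain ⟨r, hrt, hxr⟩ := Set.mem_iUnion₂.mp (ht (Set.mem_univ x))
    exact hVmono (Finset.le_sup (f := id) hrt) hxr
  exact (hxV y fun i hi => (hxy i hi).symm).mpr hx

lemma isClopen_measurableSet {C : Set (ℤ → Bool)} (hC : IsClopen C) : MeasurableSet C := by
  obtain ⟨r, hr⟩ := exists_deps_of_isClopen hC
  exact hr.measurableSet

lemma exists_clopen_separation {K₁ K₂ : Set (ℤ → Bool)} (h₁ : IsClosed K₁) (h₂ : IsClosed K₂)
    (hd : Disjoint K₁ K₂) : ∃ U, IsClopen U ∧ K₁ ⊆ U ∧ Disjoint U K₂ := by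
  set W : ℕ → Set (ℤ → Bool) :=
    fun r => {y | ∃ x ∈ K₁, ∀ i : ℤ, |i| ≤ (r : ℤ) → y i = x i} with hW
  have hWdeps : ∀ r, Deps (W r) r := by
    rintro r y y' hyy' ⟨x, hx, hyx⟩
    exact ⟨x, hx, fun i hi => ((hyy' i hi).symm).trans (hyx i hi)⟩
  have hK₁W : ∀ r, K₁ ⊆ W r := fun r x hx => ⟨x, hx, fun _ _ => rfl⟩
  by_contra hcon
  push_neg at hcon
  have hne : ∀ r, (K₂ ∩ W r).Nonempty := by
    intro r
    obtain ⟨y, h1, h2⟩ := Set.not_disjoint_iff.mp (hcon (W r) (hWdeps r).isClopen (hK₁W r))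
    exact ⟨y, h2, h1⟩
  have hWanti : ∀ {r s : ℕ}, r ≤ s → W s ⊆ W r := by
    rintro r s hrs y ⟨x, hx, hyx⟩
    exact ⟨x, hx, fun i hi => hyx i (hi.trans (by exact_mod_cast hrs))⟩
  obtain ⟨y, hy⟩ := IsCompact.nonempty_iInter_of_directed_nonempty_isCompact_isClosed
    (fun r : ℕ => K₂ ∩ W r)
    (by
      intro r s
      refine ⟨max r s, fun z hz => ⟨hz.1, hWanti (le_max_left r s) hz.2⟩,
        fun z hz => ⟨hz.1, hWanti (le_max_right r s) hz.2⟩⟩)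
    hne
    (fun r => (h₂.inter (hWdeps r).isClopen.isClosed).isCompact)
    (fun r => h₂.inter (hWdeps r).isClopen.isClosed)
  have hyK₂ : y ∈ K₂ := (Set.mem_iInter.mp hy 0).1
  have hyK₁ : y ∈ K₁ := by
    rw [← h₁.closure_eq]
    rw [mem_closure_iff]
    intro o ho hyo
    obtain ⟨I, u, hu, hsub⟩ := isOpen_pi_iff.mp ho y hyo
    obtain ⟨x, hxK₁, hyx⟩ := (Set.mem_iInter.mp hy (I.sup Int.natAbs)).2
    refine ⟨x, hsub ?_, hxK₁⟩
    intro a ha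
    have : y a = x a := by
      refine hyx a ?_
      rw [Int.abs_eq_natAbs]
      exact_mod_cast Finset.le_sup (f := Int.natAbs) ha
    rw [← this]
    exact (hu a ha).2
  exact Set.disjoint_left.mp hd hyK₁ hyK₂

lemma pi_eq_generateFrom_isClopen :
    (inferInstance : MeasurableSpace (ℤ → Bool)) =
      MeasurableSpace.generateFrom {s : Set (ℤ → Bool) | IsClopen s} := by
  have hb : TopologicalSpace.IsTopologicalBasis {s : Set (ℤ → Bool) | IsClopen s} := by
    refine TopologicalSpace.isTopologicalBasis_of_isOpen_of_nhds (fun u hu => hu.isOpen) ?_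
    intro a u hau hu
    obtain ⟨r, hr⟩ := cylinder_subset_of_isOpen hu hau
    refine ⟨{y | ∀ i : ℤ, |i| ≤ (r : ℤ) → y i = a i}, ?_, fun _ _ => rfl, fun y hy => hr y hy⟩
    refine Deps.isClopen (r := r) ?_
    intro x y hxy hx i hi
    exact (hxy i hi).symm.trans (hx i hi)
  rw [BorelSpace.measurable_eq (α := ℤ → Bool), hb.borel_eq_generateFrom]

lemma isPiSystem_isClopen : IsPiSystem {s : Set (ℤ → Bool) | IsClopen s} :=
  fun s hs t ht _ => hs.inter ht

end

noncomputable section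

open scoped ENNReal

section Dyn

variable {X : Type*} [MeasurableSpace X]

open scoped Classical in
/-- the bit `1_A(T^j x)` for `j ≥ 0`, and `false` for `j < 0`. -/
def ebit (T : X → X) (A : Set X) (j : ℤ) (x : X) : Bool :=
  if 0 ≤ j ∧ T^[j.toNat] x ∈ A then true else false

lemma ebit_eq_true_iff {T : X → X} {A : Set X} {j : ℤ} {x : X} :
    ebit T A j x = true ↔ (0 ≤ j ∧ T^[j.toNat] x ∈ A) := by
  simp [ebit]

lemma measurable_ebit {T : X → X} {A : Set X} (hT : Measurable T) (hA : MeasurableSet A)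
    (j : ℤ) : Measurable (fun x => ebit T A j x) := by
  have h : ∀ s : Set Bool, MeasurableSet ((fun x => ebit T A j x) ⁻¹' s) := by
    intro s
    by_cases ht : true ∈ s <;> by_cases hf : false ∈ s
    · have : (fun x => ebit T A j x) ⁻¹' s = Set.univ := by
        ext x; simp only [Set.mem_preimage, Set.mem_univ, iff_true]
        cases hb : ebit T A j x
        · exact hf
        · exact ht
      rw [this]; exact MeasurableSet.univ
    · have : (fun x => ebit T A j x) ⁻¹' s = {x | ebit T A j x = true} := by
        ext x; simp only [Set.mem_preimage, Set.mem_setOf_eq]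
        constructor
        · intro hx; cases hb : ebit T A j x
          · rw [hb] at hx; exact absurd hx hf
          · rfl
        · intro hx; rw [hx]; exact ht
      rw [this]
      have : {x | ebit T A j x = true} = if 0 ≤ j then T^[j.toNat] ⁻¹' A else ∅ := by
        ext x
        by_cases hj : 0 ≤ j <;> simp [ebit_eq_true_iff, hj]
      rw [this]
      split
      · exact (hT.iterate _) hA
      · exact MeasurableSet.empty
    · have : (fun x => ebit T A j x) ⁻¹' s = {x | ebit T A j x = true}ᶜ := by
        ext x; simp only [Set.mem_preimage, Set.mem_compl_iff, Set.mem_setOf_eq]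
        cases hb : ebit T A j x <;> simp_all
      rw [this]
      have h2 : {x | ebit T A j x = true} = if 0 ≤ j then T^[j.toNat] ⁻¹' A else ∅ := by
        ext x
        by_cases hj : 0 ≤ j <;> simp [ebit_eq_true_iff, hj]
      rw [h2]
      split
      · exact ((hT.iterate _) hA).compl
      · exact MeasurableSet.empty.compl
    · have : (fun x => ebit T A j x) ⁻¹' s = ∅ := by
        ext x; simp only [Set.mem_preimage, Set.mem_empty_iff_false, iff_false]
        intro hx; cases hb : ebit T A j x
        · rw [hb] at hx; exact hf hx
        · rw [hb] at hx; exact ht hx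
      rw [this]; exact MeasurableSet.empty
  exact fun s _ => h s

lemma ebit_succ {T : X → X} {A : Set X} {j : ℤ} (hj : j ≠ -1) (x : X) :
    ebit T A (j + 1) x = ebit T A j (T x) := by
  rcases le_or_gt 0 j with hj0 | hj0
  · have h2 : (j + 1).toNat = j.toNat + 1 := by omega
    have hmem : T^[(j + 1).toNat] x = T^[j.toNat] (T x) := by
      rw [h2, Function.iterate_succ_apply]
    unfold ebit
    by_cases hA' : T^[j.toNat] (T x) ∈ A
    · rw [if_pos ⟨by omega, by rwa [hmem]⟩, if_pos ⟨hj0, hA'⟩]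
    · rw [if_neg fun h => hA' (hmem ▸ h.2), if_neg fun h => hA' h.2]
  · have h1 : ¬ (0 : ℤ) ≤ j + 1 := by omega
    have h2 : ¬ (0 : ℤ) ≤ j := by omega
    simp [ebit, h1, h2]

/-- The coding map `X → {0,1}^ℤ`, `x ↦ (1_A(T^{n i + l} x))_i`. -/
def phiMap (T : X → X) (A : Set X) (n l : ℕ) (x : X) : ℤ → Bool :=
  fun i => ebit T A ((n : ℤ) * i + (l : ℤ)) x

lemma measurable_phiMap {T : X → X} {A : Set X} (hT : Measurable T) (hA : MeasurableSet A)
    (n l : ℕ) : Measurable (phiMap T A n l) :=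
  measurable_pi_lambda _ fun i => measurable_ebit hT hA _

lemma phiMap_shift {T : X → X} {A : Set X} (n l : ℕ) (x : X) :
    shiftMap (phiMap T A n l x) = phiMap T A n (l + n) x := by
  funext i
  show phiMap T A n l x (i + 1) = _
  unfold phiMap
  congr 1
  push_cast
  ring

lemma phiMap_dil {T : X → X} {A : Set X} (n m l : ℕ) (x : X) :
    dilMap m (phiMap T A n l x) = phiMap T A (n * m) l x := by
  funext i
  show phiMap T A n l x ((m : ℤ) * i) = _
  unfold phiMap
  congr 1
  push_cast
  ring

lemma phiMap_succ_agree {T : X → X} {A : Set X} {n l r : ℕ} (hl : n * r ≤ l) (x : X) :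
    ∀ i : ℤ, |i| ≤ (r : ℤ) → phiMap T A n (l + 1) x i = phiMap T A n l (T x) i := by
  intro i hi
  have habs : -(r : ℤ) ≤ i ∧ i ≤ (r : ℤ) := abs_le.mp hi
  have hne : (n : ℤ) * i + (l : ℤ) ≠ -1 := by
    have h1 : -((n : ℤ) * r) ≤ (n : ℤ) * i := by
      have := mul_le_mul_of_nonneg_left habs.1 (by positivity : (0:ℤ) ≤ (n:ℤ))
      nlinarith [habs.1, habs.2]
    have h2 : ((n : ℤ) * r) ≤ (l : ℤ) := by exact_mod_cast hl
    omega
  show ebit T A ((n : ℤ) * i + (l + 1 : ℕ)) x = ebit T A ((n : ℤ) * i + l) (T x)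
  have : ((n : ℤ) * i + ((l : ℕ) + 1 : ℕ)) = ((n : ℤ) * i + l) + 1 := by push_cast; ring
  rw [this, ebit_succ hne]

end Dyn

end

noncomputable section

open scoped ENNReal

namespace SSAux

variable {X : Type*} [MeasurableSpace X]

/-- value of the pushforward of `μ` under `phiMap T A n l` on the set `C`. -/
def mval (μ : Measure X) (T : X → X) (A : Set X) (n l : ℕ) (C : Set (ℤ → Bool)) : ℝ≥0∞ :=
  μ (phiMap T A n l ⁻¹' C)

/-- the stable (large `l`) value of `mval`. -/
def Mval (μ : Measure X) (T : X → X) (A : Set X) (n : ℕ) (C : Set (ℤ → Bool)) : ℝ≥0∞ :=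
  Filter.limsup (fun l => mval μ T A n l C) Filter.atTop

variable {μ : Measure X} {T : X → X} {A : Set X}

lemma mval_le_one [IsProbabilityMeasure μ] {n l : ℕ} {C : Set (ℤ → Bool)} :
    mval μ T A n l C ≤ 1 :=
  prob_le_one

lemma Mval_le_one [IsProbabilityMeasure μ] {n : ℕ} {C : Set (ℤ → Bool)} :
    Mval μ T A n C ≤ 1 := by
  refine Filter.limsup_le_of_le ?_ (Filter.Eventually.of_forall fun l => mval_le_one)
  isBoundedDefault

lemma mval_succ (hT : MeasurePreserving T μ μ) (hA : MeasurableSet A)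
    {n l r : ℕ} {C : Set (ℤ → Bool)} (hC : MeasurableSet C) (hD : Deps C r)
    (hl : n * r ≤ l) : mval μ T A n (l + 1) C = mval μ T A n l C := by
  have hkey : phiMap T A n (l + 1) ⁻¹' C = T ⁻¹' (phiMap T A n l ⁻¹' C) := by
    ext x
    simp only [Set.mem_preimage]
    exact hD.mem_iff (phiMap_succ_agree hl x)
  rw [mval, hkey,
    hT.measure_preimage ((measurable_phiMap hT.measurable hA n l) hC).nullMeasurableSet, mval]

lemma mval_stable (hT : MeasurePreserving T μ μ) (hA : MeasurableSet A)
    {n r : ℕ} {C : Set (ℤ → Bool)} (hC : MeasurableSet C) (hD : Deps C r) :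
    ∀ l, n * r ≤ l → mval μ T A n l C = mval μ T A n (n * r) C := by
  intro l hl
  induction l, hl using Nat.le_induction with
  | base => rfl
  | succ l hl ih => rw [mval_succ hT hA hC hD hl, ih]

lemma Mval_eq (hT : MeasurePreserving T μ μ) (hA : MeasurableSet A)
    {n r l : ℕ} {C : Set (ℤ → Bool)} (hC : MeasurableSet C) (hD : Deps C r)
    (hl : n * r ≤ l) : Mval μ T A n C = mval μ T A n l C := by
  have hev : ∀ᶠ l' in Filter.atTop, mval μ T A n l' C = mval μ T A n (n * r) C :=
    Filter.eventually_atTop.mpr ⟨n * r, mval_stable hT hA hC hD⟩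
  rw [Mval, Filter.limsup_congr hev, Filter.limsup_const, mval_stable hT hA hC hD l hl]

lemma Mval_shift (hT : MeasurePreserving T μ μ) (hA : MeasurableSet A)
    {n r : ℕ} {C : Set (ℤ → Bool)} (hC : MeasurableSet C) (hD : Deps C r) :
    Mval μ T A n (shiftMap ⁻¹' C) = Mval μ T A n C := by
  have hDs : Deps (shiftMap ⁻¹' C) (r + 1) := by
    intro x y hxy hx
    refine hD (fun i hi => ?_) hx
    show x (i + 1) = y (i + 1)
    refine hxy (i + 1) ?_
    have := abs_le.mp hi
    rw [abs_le]
    omega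
  have hCs : MeasurableSet (shiftMap ⁻¹' C) := hDs.measurableSet
  have h1 : Mval μ T A n (shiftMap ⁻¹' C) = mval μ T A n (n * (r + 1)) (shiftMap ⁻¹' C) :=
    Mval_eq hT hA hCs hDs le_rfl
  have h2 : phiMap T A n (n * (r + 1)) ⁻¹' (shiftMap ⁻¹' C)
      = phiMap T A n (n * (r + 1) + n) ⁻¹' C := by
    ext x
    simp only [Set.mem_preimage]
    rw [show shiftMap (phiMap T A n (n * (r + 1)) x) = phiMap T A n (n * (r + 1) + n) x from
      phiMap_shift _ _ _]
  have h3 : Mval μ T A n C = mval μ T A n (n * (r + 1) + n) C :=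
    Mval_eq hT hA hC hD (by nlinarith)
  rw [h1, mval, h2, h3, mval]

lemma Mval_dil (hT : MeasurePreserving T μ μ) (hA : MeasurableSet A)
    {n m r : ℕ} {C : Set (ℤ → Bool)} (hC : MeasurableSet C) (hD : Deps C r) :
    Mval μ T A n (dilMap m ⁻¹' C) = Mval μ T A (n * m) C := by
  have hDm : Deps (dilMap m ⁻¹' C) (m * r) := by
    intro x y hxy hx
    refine hD (fun i hi => ?_) hx
    show x ((m : ℤ) * i) = y ((m : ℤ) * i)
    refine hxy ((m : ℤ) * i) ?_
    have h1 : |(m : ℤ) * i| = (m : ℤ) * |i| := by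
      rw [abs_mul, abs_of_nonneg (by positivity : (0 : ℤ) ≤ (m : ℤ))]
    rw [h1]
    push_cast
    exact mul_le_mul_of_nonneg_left hi (by positivity)
  have hCm : MeasurableSet (dilMap m ⁻¹' C) := hDm.measurableSet
  have h1 : Mval μ T A n (dilMap m ⁻¹' C) = mval μ T A n (n * (m * r)) (dilMap m ⁻¹' C) :=
    Mval_eq hT hA hCm hDm le_rfl
  have h2 : phiMap T A n (n * (m * r)) ⁻¹' (dilMap m ⁻¹' C)
      = phiMap T A (n * m) (n * (m * r)) ⁻¹' C := by
    ext x
    simp only [Set.mem_preimage]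
    rw [show dilMap m (phiMap T A n (n * (m * r)) x) = phiMap T A (n * m) (n * (m * r)) x from
      phiMap_dil _ _ _ _]
  have h3 : Mval μ T A (n * m) C = mval μ T A (n * m) (n * (m * r)) C :=
    Mval_eq hT hA hC hD (by ring_nf; omega)
  rw [h1, mval, h2, h3, mval]

lemma Mval_base (hT : MeasurePreserving T μ μ) (hA : MeasurableSet A) (n : ℕ) :
    Mval μ T A n {x : ℤ → Bool | x 0 = true} = μ A := by
  have h : ∀ l : ℕ, mval μ T A n l {x : ℤ → Bool | x 0 = true} = μ A := by
    intro l
    have h1 : phiMap T A n l ⁻¹' {x : ℤ → Bool | x 0 = true} = T^[l] ⁻¹' A := by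
      ext x
      simp only [Set.mem_preimage, Set.mem_setOf_eq, phiMap]
      rw [show (n : ℤ) * (0 : ℤ) + (l : ℤ) = (l : ℤ) by ring, ebit_eq_true_iff]
      simp [Int.toNat_natCast]
    rw [mval, h1, (hT.iterate l).measure_preimage hA.nullMeasurableSet]
  rw [Mval]
  simp only [h]
  exact Filter.limsup_const _

lemma Mval_univ [IsProbabilityMeasure μ] (n : ℕ) :
    Mval μ T A n (Set.univ : Set (ℤ → Bool)) = 1 := by
  have h : ∀ l : ℕ, mval μ T A n l Set.univ = 1 := fun l => by
    rw [mval, Set.preimage_univ, measure_univ]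
  rw [Mval]
  simp only [h]
  exact Filter.limsup_const _

lemma Mval_add (hT : MeasurePreserving T μ μ) (hA : MeasurableSet A)
    {n rC rD : ℕ} {C D : Set (ℤ → Bool)} (hC : MeasurableSet C) (hDC : Deps C rC)
    (hD : MeasurableSet D) (hDD : Deps D rD) (hdisj : Disjoint C D) :
    Mval μ T A n (C ∪ D) = Mval μ T A n C + Mval μ T A n D := by
  set r := max rC rD with hr
  have hDu : Deps (C ∪ D) r := by
    intro x y hxy hx
    rcases hx with hx | hx
    · exact Or.inl (hDC.mono (le_max_left _ _) hxy hx)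
    · exact Or.inr (hDD.mono (le_max_right _ _) hxy hx)
  have h1 : Mval μ T A n (C ∪ D) = mval μ T A n (n * r) (C ∪ D) :=
    Mval_eq hT hA (hC.union hD) hDu le_rfl
  have h2 : Mval μ T A n C = mval μ T A n (n * r) C :=
    Mval_eq hT hA hC (hDC.mono (le_max_left _ _)) le_rfl
  have h3 : Mval μ T A n D = mval μ T A n (n * r) D :=
    Mval_eq hT hA hD (hDD.mono (le_max_right _ _)) le_rfl
  rw [h1, h2, h3, mval, mval, mval, Set.preimage_union]
  exact measure_union (hdisj.preimage _) ((measurable_phiMap hT.measurable hA _ _) hD)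

lemma Mval_union_le (hT : MeasurePreserving T μ μ) (hA : MeasurableSet A)
    {n rC rD : ℕ} {C D : Set (ℤ → Bool)} (hC : MeasurableSet C) (hDC : Deps C rC)
    (hD : MeasurableSet D) (hDD : Deps D rD) :
    Mval μ T A n (C ∪ D) ≤ Mval μ T A n C + Mval μ T A n D := by
  set r := max rC rD with hr
  have hDu : Deps (C ∪ D) r := by
    intro x y hxy hx
    rcases hx with hx | hx
    · exact Or.inl (hDC.mono (le_max_left _ _) hxy hx)
    · exact Or.inr (hDD.mono (le_max_right _ _) hxy hx)
  rw [Mval_eq hT hA (hC.union hD) hDu (le_refl (n * r)),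
    Mval_eq hT hA hC (hDC.mono (le_max_left _ _)) (le_refl (n * r)),
    Mval_eq hT hA hD (hDD.mono (le_max_right _ _)) (le_refl (n * r)),
    mval, mval, mval, Set.preimage_union]
  exact measure_union_le _ _

lemma Mval_mono {n : ℕ} {C D : Set (ℤ → Bool)} (h : C ⊆ D) :
    Mval μ T A n C ≤ Mval μ T A n D := by
  refine Filter.limsup_le_limsup (Filter.Eventually.of_forall fun l => ?_) ?_ ?_
  · exact measure_mono (Set.preimage_mono h)
  all_goals isBoundedDefault

end SSAux

end

noncomputable section

open scoped ENNReal

namespace SSAux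

/-- Weierstrass-type product inequality, subtraction-free form. -/
lemma prod_sub_bound (N : ℕ) (f a : ℕ → ℕ) :
    ∀ (s : Finset ℕ), (∀ p ∈ s, a p ≤ f p ∧ N ≤ f p) →
    (N + 1) * (∏ p ∈ s, (f p + 1)) ≤
      (N + 1) * (∏ p ∈ s, (f p + 1 - a p)) + (∑ p ∈ s, a p) * ∏ p ∈ s, (f p + 1) := by
  intro s
  induction s using Finset.induction_on with
  | empty => simp
  | @insert p t hp ih =>
    intro hyp
    have hpt := hyp p (Finset.mem_insert_self p t)
    have ht : ∀ q ∈ t, a q ≤ f q ∧ N ≤ f q := fun q hq => hyp q (Finset.mem_insert_of_mem hq)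
    have IH := ih ht
    set P := ∏ q ∈ t, (f q + 1) with hP
    set R := ∏ q ∈ t, (f q + 1 - a q) with hR
    set S := ∑ q ∈ t, a q with hS
    have hRP : R ≤ P := Finset.prod_le_prod' fun q _ => by omega
    rw [Finset.prod_insert hp, Finset.prod_insert hp, Finset.sum_insert hp]
    set A' := f p + 1 with hA'
    set B' := f p + 1 - a p with hB'
    have hBA : B' + a p = A' := by omega
    have hNA : N + 1 ≤ A' := by omega
    calc (N + 1) * (A' * P) = A' * ((N + 1) * P) := by ring
      _ ≤ A' * ((N + 1) * R + S * P) := Nat.mul_le_mul_left _ IH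
      _ = (B' + a p) * ((N + 1) * R) + A' * (S * P) := by rw [hBA]; ring
      _ = (N + 1) * (B' * R) + a p * ((N + 1) * R) + S * (A' * P) := by ring
      _ ≤ (N + 1) * (B' * R) + a p * (A' * P) + S * (A' * P) := by
          have h1 : (N + 1) * R ≤ A' * P := Nat.mul_le_mul hNA hRP
          have h2 : a p * ((N + 1) * R) ≤ a p * (A' * P) := Nat.mul_le_mul_left _ h1
          omega
      _ = (N + 1) * (B' * R) + (a p + S) * (A' * P) := by ring

def QN (N : ℕ) : ℕ := (Nat.factorial N) ^ N

lemma QN_ne_zero (N : ℕ) : QN N ≠ 0 :=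
  pow_ne_zero _ (Nat.factorial_ne_zero N)

lemma dvd_QN {m N : ℕ} (hm : 0 < m) (hmN : m ≤ N) : m ∣ QN N := by
  have h1 : m ∣ Nat.factorial N := Nat.dvd_factorial hm hmN
  exact h1.trans (dvd_pow_self _ (by omega : N ≠ 0))

/-- The key divisor-counting estimate for the multiplicative Følner property. -/
lemma card_divisors_sub_bound {m N : ℕ} (hm : 0 < m) (hmN : m ≤ N) :
    (N + 1) * ((QN N).divisors.card - ((QN N / m)).divisors.card) ≤
      (m * (m + 1)) * (QN N).divisors.card := by
  set Q := QN N with hQdef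
  have hQ : Q ≠ 0 := QN_ne_zero N
  have hmQ : m ∣ Q := dvd_QN hm hmN
  have hQm : Q / m ≠ 0 := Nat.div_ne_zero_iff.mpr ⟨(by omega : m ≠ 0),
    (Nat.le_of_dvd (Nat.pos_of_ne_zero hQ) hmQ)⟩
  set f := Q.factorization with hf
  set a := m.factorization with ha
  -- hypotheses of prod_sub_bound over s = Q.primeFactors
  have hyp : ∀ p ∈ Q.primeFactors, a p ≤ f p ∧ N ≤ f p := by
    intro p hps
    constructor
    · have : m.factorization ≤ Q.factorization :=
        (Nat.factorization_le_iff_dvd (by omega) hQ).mpr hmQ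
      exact this p
    · have hp : p.Prime := Nat.prime_of_mem_primeFactors hps
      have hpdvd : p ∣ Q := Nat.dvd_of_mem_primeFactors hps
      have hpfac : p ∣ Nat.factorial N := hp.dvd_of_dvd_pow (hQdef ▸ hpdvd)
      have hv : 1 ≤ (Nat.factorial N).factorization p :=
        (Nat.Prime.factorization_pos_of_dvd hp (Nat.factorial_ne_zero N) hpfac)
      have heq : Q.factorization = N • (Nat.factorial N).factorization := by
        rw [hQdef]
        unfold QN
        rw [Nat.factorization_pow]
      have : f p = N * (Nat.factorial N).factorization p := by
        rw [hf, heq]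
        simp
      rw [this]
      calc N = N * 1 := (mul_one N).symm
        _ ≤ N * (Nat.factorial N).factorization p := Nat.mul_le_mul_left _ hv
    -- card formulas
  have hcardQ : Q.divisors.card = ∏ p ∈ Q.primeFactors, (f p + 1) := Nat.card_divisors hQ
  have hcardQm : (Q / m).divisors.card = ∏ p ∈ Q.primeFactors, (f p + 1 - a p) := by
    rw [Nat.card_divisors hQm]
    have hsub : (Q / m).primeFactors ⊆ Q.primeFactors := by
      intro p hp
      rw [Nat.mem_primeFactors] at hp ⊢
      exact ⟨hp.1, hp.2.1.trans (Nat.div_dvd_of_dvd hmQ), hQ⟩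
    rw [Finset.prod_subset hsub]
    · refine Finset.prod_congr rfl fun p hp => ?_
      have h1 : a p ≤ f p := (hyp p hp).1
      rw [Nat.factorization_div hmQ]
      show f p - a p + 1 = f p + 1 - a p
      omega
    · intro p hpm hpn
      have h0 : (Q / m).factorization p = 0 := by
        rw [← Finsupp.notMem_support_iff, Nat.support_factorization]
        exact hpn
      rw [h0]
      omega
  have hsum : ∑ p ∈ Q.primeFactors, a p ≤ m * (m + 1) := by
    have hsupp : ∀ p ∈ Q.primeFactors, p ∉ m.primeFactors → a p = 0 := by
      intro p _ hpm
      rw [← Finsupp.notMem_support_iff, Nat.support_factorization]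
      exact hpm
    have hsub2 : m.primeFactors ⊆ Q.primeFactors := by
      intro p hp
      rw [Nat.mem_primeFactors] at hp ⊢
      exact ⟨hp.1, hp.2.1.trans hmQ, hQ⟩
    rw [← Finset.sum_subset hsub2 hsupp]
    have h1 : ∀ p ∈ m.primeFactors, a p ≤ m := by
      intro p hp
      exact le_of_lt (Nat.factorization_lt p (by omega))
    calc ∑ p ∈ m.primeFactors, a p ≤ m.primeFactors.card * m :=
          Finset.sum_le_card_nsmul _ _ m h1
      _ ≤ (m + 1) * m := by
          refine Nat.mul_le_mul_right _ ?_
          calc m.primeFactors.card ≤ (Finset.range (m + 1)).card := by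
                refine Finset.card_le_card ?_
                intro p hp
                rw [Finset.mem_range]
                have := Nat.le_of_mem_primeFactors hp
                omega
            _ = m + 1 := Finset.card_range _
      _ = m * (m + 1) := by ring
  have hmain := prod_sub_bound N f a Q.primeFactors hyp
  rw [← hcardQ, ← hcardQm] at hmain
  have hle : (Q / m).divisors.card ≤ Q.divisors.card :=
    Finset.card_le_card (Nat.divisors_subset_of_dvd hQ (Nat.div_dvd_of_dvd hmQ))
  have hKQ := Nat.mul_le_mul_right (Q.divisors.card) hsum
  obtain ⟨c, hc⟩ := Nat.le.dest hle
  have hsubc : Q.divisors.card - (Q / m).divisors.card = c := by omega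
  rw [hsubc]
  have hmain2 : (N + 1) * (Q / m).divisors.card + (N + 1) * c
      ≤ (N + 1) * (Q / m).divisors.card + (∑ p ∈ Q.primeFactors, a p) * Q.divisors.card := by
    calc (N + 1) * (Q / m).divisors.card + (N + 1) * c
        = (N + 1) * Q.divisors.card := by rw [← hc]; ring
      _ ≤ _ := hmain
  have h4 : (N + 1) * c ≤ (∑ p ∈ Q.primeFactors, a p) * Q.divisors.card :=
    (add_le_add_iff_left _).mp hmain2
  exact h4.trans hKQ

end SSAux

end

noncomputable section

open scoped ENNReal
open Filter

namespace SSAux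

variable {X : Type*} [MeasurableSpace X]

/-- average of `Mval` over the divisors of `(N!)^N` (a multiplicative Følner sequence). -/
def avg (μ : Measure X) (T : X → X) (A : Set X) (N : ℕ) (C : Set (ℤ → Bool)) : ℝ≥0∞ :=
  ((QN N).divisors.card : ℝ≥0∞)⁻¹ * ∑ n ∈ (QN N).divisors, Mval μ T A n C

/-- a fixed ultrafilter extending `atTop` on `ℕ`. -/
def UF : Ultrafilter ℕ := Ultrafilter.of atTop

lemma UF_le_atTop : (UF : Filter ℕ) ≤ atTop := Ultrafilter.of_le _

/-- the limit functional. -/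
def ell (μ : Measure X) (T : X → X) (A : Set X) (C : Set (ℤ → Bool)) : ℝ≥0∞ :=
  (UF.map fun N => avg μ T A N C).lim

lemma tendsto_avg_ell (μ : Measure X) (T : X → X) (A : Set X) (C : Set (ℤ → Bool)) :
    Tendsto (fun N => avg μ T A N C) (UF : Filter ℕ) (nhds (ell μ T A C)) := by
  exact (UF.map fun N => avg μ T A N C).le_nhds_lim

lemma cardQN_ne_zero (N : ℕ) : (QN N).divisors.card ≠ 0 :=
  Finset.card_ne_zero_of_mem (Nat.one_mem_divisors.mpr (QN_ne_zero N))

lemma cardQN_cast_ne_zero (N : ℕ) : ((QN N).divisors.card : ℝ≥0∞) ≠ 0 := by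
  exact_mod_cast cardQN_ne_zero N

lemma cardQN_cast_ne_top (N : ℕ) : ((QN N).divisors.card : ℝ≥0∞) ≠ ∞ :=
  ENNReal.natCast_ne_top _

variable {μ : Measure X} {T : X → X} {A : Set X}

lemma avg_congr {N : ℕ} {C D : Set (ℤ → Bool)}
    (h : ∀ n, 0 < n → Mval μ T A n C = Mval μ T A n D) : avg μ T A N C = avg μ T A N D := by
  unfold avg
  congr 1
  exact Finset.sum_congr rfl fun n hn => h n (Nat.pos_of_mem_divisors hn)

lemma avg_const {N : ℕ} {C : Set (ℤ → Bool)} {c : ℝ≥0∞}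
    (h : ∀ n, 0 < n → Mval μ T A n C = c) : avg μ T A N C = c := by
  unfold avg
  rw [Finset.sum_congr rfl fun n hn => h n (Nat.pos_of_mem_divisors hn), Finset.sum_const,
    nsmul_eq_mul, ← mul_assoc, ENNReal.inv_mul_cancel (cardQN_cast_ne_zero N)
      (cardQN_cast_ne_top N), one_mul]

lemma avg_le_const {N : ℕ} {C : Set (ℤ → Bool)} {c : ℝ≥0∞}
    (h : ∀ n, 0 < n → Mval μ T A n C ≤ c) : avg μ T A N C ≤ c := by
  unfold avg
  calc ((QN N).divisors.card : ℝ≥0∞)⁻¹ * ∑ n ∈ (QN N).divisors, Mval μ T A n C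
      ≤ ((QN N).divisors.card : ℝ≥0∞)⁻¹ * ((QN N).divisors.card * c) := by
        refine mul_le_mul_right ?_ _
        calc ∑ n ∈ (QN N).divisors, Mval μ T A n C
            ≤ ∑ _n ∈ (QN N).divisors, c :=
              Finset.sum_le_sum fun n hn => h n (Nat.pos_of_mem_divisors hn)
          _ = (QN N).divisors.card * c := by rw [Finset.sum_const, nsmul_eq_mul]
    _ = c := by
        rw [← mul_assoc, ENNReal.inv_mul_cancel (cardQN_cast_ne_zero N)
          (cardQN_cast_ne_top N), one_mul]

lemma ell_eq_of_avg_eq {C D : Set (ℤ → Bool)}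
    (h : ∀ N, avg μ T A N C = avg μ T A N D) : ell μ T A C = ell μ T A D :=
  tendsto_nhds_unique ((tendsto_avg_ell μ T A C).congr h) (tendsto_avg_ell μ T A D)

lemma ell_const {C : Set (ℤ → Bool)} {c : ℝ≥0∞}
    (h : ∀ n, 0 < n → Mval μ T A n C = c) : ell μ T A C = c :=
  tendsto_nhds_unique ((tendsto_avg_ell μ T A C).congr fun _ => avg_const h) tendsto_const_nhds
    |>.symm ▸ rfl

lemma ell_le_const {C : Set (ℤ → Bool)} {c : ℝ≥0∞}
    (h : ∀ n, 0 < n → Mval μ T A n C ≤ c) : ell μ T A C ≤ c :=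
  le_of_tendsto (tendsto_avg_ell μ T A C) (Eventually.of_forall fun _ => avg_le_const h)

lemma ell_univ [IsProbabilityMeasure μ] : ell μ T A Set.univ = 1 :=
  ell_const fun n _ => Mval_univ n

lemma ell_base (hT : MeasurePreserving T μ μ) (hA : MeasurableSet A) :
    ell μ T A {x : ℤ → Bool | x 0 = true} = μ A :=
  ell_const fun n _ => Mval_base hT hA n

lemma ell_mono {C D : Set (ℤ → Bool)} (h : C ⊆ D) : ell μ T A C ≤ ell μ T A D := by
  refine le_of_tendsto_of_tendsto (tendsto_avg_ell μ T A C) (tendsto_avg_ell μ T A D)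
    (Eventually.of_forall fun N => ?_)
  exact mul_le_mul_right (Finset.sum_le_sum fun n _ => Mval_mono h) _

lemma ell_add (hT : MeasurePreserving T μ μ) (hA : MeasurableSet A)
    {rC rD : ℕ} {C D : Set (ℤ → Bool)} (hC : MeasurableSet C) (hDC : Deps C rC)
    (hD : MeasurableSet D) (hDD : Deps D rD) (hdisj : Disjoint C D) :
    ell μ T A (C ∪ D) = ell μ T A C + ell μ T A D := by
  refine tendsto_nhds_unique (tendsto_avg_ell μ T A (C ∪ D)) ?_
  have h : ∀ N, avg μ T A N (C ∪ D) = avg μ T A N C + avg μ T A N D := by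
    intro N
    unfold avg
    rw [← mul_add, ← Finset.sum_add_distrib]
    congr 1
    exact Finset.sum_congr rfl fun n _ => Mval_add hT hA hC hDC hD hDD hdisj
  exact ((tendsto_avg_ell μ T A C).add (tendsto_avg_ell μ T A D)).congr fun N => (h N).symm

lemma ell_union_le (hT : MeasurePreserving T μ μ) (hA : MeasurableSet A)
    {rC rD : ℕ} {C D : Set (ℤ → Bool)} (hC : MeasurableSet C) (hDC : Deps C rC)
    (hD : MeasurableSet D) (hDD : Deps D rD) :
    ell μ T A (C ∪ D) ≤ ell μ T A C + ell μ T A D := by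
  refine le_of_tendsto_of_tendsto (tendsto_avg_ell μ T A (C ∪ D))
    ((tendsto_avg_ell μ T A C).add (tendsto_avg_ell μ T A D))
    (Eventually.of_forall fun N => ?_)
  calc avg μ T A N (C ∪ D)
      ≤ ((QN N).divisors.card : ℝ≥0∞)⁻¹
          * ∑ n ∈ (QN N).divisors, (Mval μ T A n C + Mval μ T A n D) := by
        exact mul_le_mul_right (Finset.sum_le_sum fun n _ =>
          Mval_union_le hT hA hC hDC hD hDD) _
    _ = avg μ T A N C + avg μ T A N D := by
        unfold avg
        rw [← mul_add, ← Finset.sum_add_distrib]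

lemma ell_shift (hT : MeasurePreserving T μ μ) (hA : MeasurableSet A)
    {r : ℕ} {C : Set (ℤ → Bool)} (hC : MeasurableSet C) (hD : Deps C r) :
    ell μ T A (shiftMap ⁻¹' C) = ell μ T A C :=
  ell_eq_of_avg_eq fun _ => avg_congr fun n _ => Mval_shift hT hA hC hD

end SSAux

end

noncomputable section

open scoped ENNReal
open Filter

namespace SSAux

variable {X : Type*} [MeasurableSpace X] {μ : Measure X} {T : X → X} {A : Set X}

lemma eps_tendsto_zero (K : ℕ) :
    Tendsto (fun N : ℕ => (K : ℝ≥0∞) * ((N : ℝ≥0∞) + 1)⁻¹) atTop (nhds 0) := by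
  have h0 : Tendsto (fun N : ℕ => ((N : ℝ≥0∞) + 1)⁻¹) atTop (nhds 0) := by
    have h1 : Tendsto (fun n : ℕ => ((n : ℝ≥0∞))⁻¹) atTop (nhds 0) :=
      ENNReal.tendsto_inv_nat_nhds_zero
    have h2 : Tendsto (fun N : ℕ => N + 1) atTop atTop := tendsto_add_atTop_nat 1
    have h3 := h1.comp h2
    refine h3.congr fun N => ?_
    simp [Function.comp]
  have := ENNReal.Tendsto.const_mul h0 (Or.inr (by simp : (K : ℝ≥0∞) ≠ ∞))
  rwa [mul_zero] at this

lemma avg_dil_bounds [IsProbabilityMeasure μ] (hT : MeasurePreserving T μ μ)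
    (hA : MeasurableSet A) {m : ℕ} (hm : 0 < m) {C : Set (ℤ → Bool)} (hC : MeasurableSet C)
    {r : ℕ} (hD : Deps C r) {N : ℕ} (hmN : m ≤ N) :
    avg μ T A N (dilMap m ⁻¹' C)
        ≤ avg μ T A N C + (m * (m + 1) : ℕ) * ((N : ℝ≥0∞) + 1)⁻¹
      ∧ avg μ T A N C
        ≤ avg μ T A N (dilMap m ⁻¹' C) + (m * (m + 1) : ℕ) * ((N : ℝ≥0∞) + 1)⁻¹ := by
  classical
  set Q := QN N with hQdef
  have hQ : Q ≠ 0 := QN_ne_zero N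
  have hmQ : m ∣ Q := dvd_QN hm hmN
  have hQm : Q / m ≠ 0 := Nat.div_ne_zero_iff.mpr ⟨(by omega : m ≠ 0),
    (Nat.le_of_dvd (Nat.pos_of_ne_zero hQ) hmQ)⟩
  set g : ℕ → ℝ≥0∞ := fun n => Mval μ T A n C with hg
  set cQ := Q.divisors.card with hcQ
  set cQm := (Q / m).divisors.card with hcQm
  set Dd : ℕ := cQ - cQm with hDd
  -- the three sums
  set S1 := ∑ n ∈ Q.divisors, g (n * m) with hS1
  set S2 := ∑ n ∈ Q.divisors, g n with hS2
  set Sc := ∑ n ∈ (Q / m).divisors, g (n * m) with hSc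
  have hsubdiv : (Q / m).divisors ⊆ Q.divisors :=
    Nat.divisors_subset_of_dvd hQ (Nat.div_dvd_of_dvd hmQ)
  have hg1 : ∀ n, g n ≤ 1 := fun n => Mval_le_one
  -- avg of the dilated set is `cQ⁻¹ * S1`
  have havg1 : avg μ T A N (dilMap m ⁻¹' C) = (cQ : ℝ≥0∞)⁻¹ * S1 := by
    unfold avg
    rw [← hQdef, ← hcQ, hS1]
    congr 1
    refine Finset.sum_congr rfl fun n _ => ?_
    exact Mval_dil hT hA hC hD
  have havg2 : avg μ T A N C = (cQ : ℝ≥0∞)⁻¹ * S2 := by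
    unfold avg
    rw [← hQdef, ← hcQ, hS2]
  -- S1 vs Sc
  have hc1 : Sc ≤ S1 := Finset.sum_le_sum_of_subset hsubdiv
  have hc2 : S1 ≤ Sc + Dd := by
    rw [hS1, ← Finset.sum_sdiff hsubdiv, ← hSc]
    rw [add_comm]
    refine add_le_add le_rfl ?_
    calc ∑ n ∈ Q.divisors \ (Q / m).divisors, g (n * m)
        ≤ (Q.divisors \ (Q / m).divisors).card • (1 : ℝ≥0∞) :=
          Finset.sum_le_card_nsmul _ _ 1 fun n _ => hg1 _
      _ = ((Q.divisors \ (Q / m).divisors).card : ℝ≥0∞) := by rw [nsmul_eq_mul, mul_one]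
      _ = (Dd : ℝ≥0∞) := by rw [Finset.card_sdiff_of_subset hsubdiv]
  -- Sc as a sum over the image
  have hinj : Set.InjOn (· * m) ((Q / m).divisors : Set ℕ) := fun a _ b _ h =>
    Nat.eq_of_mul_eq_mul_right hm h
  have himg : ∑ n ∈ (Q / m).divisors.image (· * m), g n = Sc := by
    rw [Finset.sum_image (fun a ha b hb h => hinj ha hb h), hSc]
  have himgsub : (Q / m).divisors.image (· * m) ⊆ Q.divisors := by
    intro x hx
    obtain ⟨n, hn, rfl⟩ := Finset.mem_image.mp hx
    rw [Nat.mem_divisors] at hn ⊢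
    constructor
    · have h1 : n * m ∣ (Q / m) * m := mul_dvd_mul_right hn.1 m
      rwa [Nat.div_mul_cancel hmQ] at h1
    · exact hQ
  have hcardimg : ((Q / m).divisors.image (· * m)).card = cQm :=
    Finset.card_image_of_injOn hinj
  have hc3 : Sc ≤ S2 := by
    rw [← himg, hS2]
    exact Finset.sum_le_sum_of_subset himgsub
  have hc4 : S2 ≤ Sc + Dd := by
    rw [hS2, ← Finset.sum_sdiff himgsub, himg, add_comm]
    refine add_le_add le_rfl ?_
    calc ∑ n ∈ Q.divisors \ (Q / m).divisors.image (· * m), g n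
        ≤ (Q.divisors \ (Q / m).divisors.image (· * m)).card • (1 : ℝ≥0∞) :=
          Finset.sum_le_card_nsmul _ _ 1 fun n _ => hg1 _
      _ = ((Q.divisors \ (Q / m).divisors.image (· * m)).card : ℝ≥0∞) := by
          rw [nsmul_eq_mul, mul_one]
      _ = (Dd : ℝ≥0∞) := by rw [Finset.card_sdiff_of_subset himgsub, hcardimg]
  -- the error term
  have herr : (cQ : ℝ≥0∞)⁻¹ * Dd ≤ (m * (m + 1) : ℕ) * ((N : ℝ≥0∞) + 1)⁻¹ := by
    have hnat := card_divisors_sub_bound hm hmN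
    have hcast : ((N : ℝ≥0∞) + 1) * (Dd : ℝ≥0∞) ≤ ((m * (m + 1) : ℕ) : ℝ≥0∞) * cQ := by
      have : (((N + 1) * Dd : ℕ) : ℝ≥0∞) ≤ (((m * (m + 1)) * cQ : ℕ) : ℝ≥0∞) := by
        exact_mod_cast hnat
      push_cast at this
      convert this using 2 <;> push_cast <;> ring
    have hN1 : ((N : ℝ≥0∞) + 1) ≠ 0 := by simp
    have hN2 : ((N : ℝ≥0∞) + 1) ≠ ∞ := by
      simp [ENNReal.add_ne_top]
    have hNinv : ((N : ℝ≥0∞) + 1)⁻¹ * ((N : ℝ≥0∞) + 1) = 1 := ENNReal.inv_mul_cancel hN1 hN2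
    have hcQ0 : (cQ : ℝ≥0∞) ≠ 0 := by rw [hcQ, hQdef]; exact cardQN_cast_ne_zero N
    have hcQt : (cQ : ℝ≥0∞) ≠ ∞ := ENNReal.natCast_ne_top _
    have hcinv : (cQ : ℝ≥0∞)⁻¹ * cQ = 1 := ENNReal.inv_mul_cancel hcQ0 hcQt
    calc (cQ : ℝ≥0∞)⁻¹ * Dd
        = (cQ : ℝ≥0∞)⁻¹ * ((((N : ℝ≥0∞) + 1)⁻¹ * ((N : ℝ≥0∞) + 1)) * Dd) := by
          rw [hNinv, one_mul]
      _ = (((N : ℝ≥0∞) + 1)⁻¹ * (cQ : ℝ≥0∞)⁻¹) * (((N : ℝ≥0∞) + 1) * Dd) := by ring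
      _ ≤ (((N : ℝ≥0∞) + 1)⁻¹ * (cQ : ℝ≥0∞)⁻¹) * (((m * (m + 1) : ℕ) : ℝ≥0∞) * cQ) :=
          mul_le_mul_right hcast _
      _ = ((m * (m + 1) : ℕ) : ℝ≥0∞) * ((N : ℝ≥0∞) + 1)⁻¹ * ((cQ : ℝ≥0∞)⁻¹ * cQ) := by ring
      _ = ((m * (m + 1) : ℕ) : ℝ≥0∞) * ((N : ℝ≥0∞) + 1)⁻¹ := by rw [hcinv, mul_one]
  constructor
  · calc avg μ T A N (dilMap m ⁻¹' C) = (cQ : ℝ≥0∞)⁻¹ * S1 := havg1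
      _ ≤ (cQ : ℝ≥0∞)⁻¹ * (Sc + Dd) := mul_le_mul_right hc2 _
      _ ≤ (cQ : ℝ≥0∞)⁻¹ * (S2 + Dd) := mul_le_mul_right (add_le_add hc3 le_rfl) _
      _ = (cQ : ℝ≥0∞)⁻¹ * S2 + (cQ : ℝ≥0∞)⁻¹ * Dd := by rw [mul_add]
      _ ≤ avg μ T A N C + (m * (m + 1) : ℕ) * ((N : ℝ≥0∞) + 1)⁻¹ := by
          rw [havg2]
          exact add_le_add le_rfl herr
  · calc avg μ T A N C = (cQ : ℝ≥0∞)⁻¹ * S2 := havg2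
      _ ≤ (cQ : ℝ≥0∞)⁻¹ * (Sc + Dd) := mul_le_mul_right hc4 _
      _ ≤ (cQ : ℝ≥0∞)⁻¹ * (S1 + Dd) := mul_le_mul_right (add_le_add hc1 le_rfl) _
      _ = (cQ : ℝ≥0∞)⁻¹ * S1 + (cQ : ℝ≥0∞)⁻¹ * Dd := by rw [mul_add]
      _ ≤ avg μ T A N (dilMap m ⁻¹' C) + (m * (m + 1) : ℕ) * ((N : ℝ≥0∞) + 1)⁻¹ := by
          rw [havg1]
          exact add_le_add le_rfl herr

lemma ell_dil [IsProbabilityMeasure μ] (hT : MeasurePreserving T μ μ)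
    (hA : MeasurableSet A) {m : ℕ} (hm : 0 < m) {C : Set (ℤ → Bool)} (hC : MeasurableSet C)
    {r : ℕ} (hD : Deps C r) :
    ell μ T A (dilMap m ⁻¹' C) = ell μ T A C := by
  set K := m * (m + 1) with hK
  have heps : Tendsto (fun N : ℕ => (K : ℝ≥0∞) * ((N : ℝ≥0∞) + 1)⁻¹) (UF : Filter ℕ) (nhds 0) :=
    (eps_tendsto_zero K).mono_left UF_le_atTop
  have hev : ∀ᶠ N in (UF : Filter ℕ),
      avg μ T A N (dilMap m ⁻¹' C) ≤ avg μ T A N C + (K : ℝ≥0∞) * ((N : ℝ≥0∞) + 1)⁻¹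
      ∧ avg μ T A N C ≤ avg μ T A N (dilMap m ⁻¹' C) + (K : ℝ≥0∞) * ((N : ℝ≥0∞) + 1)⁻¹ := by
    refine Eventually.filter_mono UF_le_atTop ?_
    refine eventually_atTop.mpr ⟨m, fun N hN => ?_⟩
    exact avg_dil_bounds hT hA hm hC hD hN
  have t1 : Tendsto (fun N => avg μ T A N C + (K : ℝ≥0∞) * ((N : ℝ≥0∞) + 1)⁻¹)
      (UF : Filter ℕ) (nhds (ell μ T A C)) := by
    have := (tendsto_avg_ell μ T A C).add heps
    rwa [add_zero] at this
  have t2 : Tendsto (fun N => avg μ T A N (dilMap m ⁻¹' C) + (K : ℝ≥0∞) * ((N : ℝ≥0∞) + 1)⁻¹)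
      (UF : Filter ℕ) (nhds (ell μ T A (dilMap m ⁻¹' C))) := by
    have := (tendsto_avg_ell μ T A (dilMap m ⁻¹' C)).add heps
    rwa [add_zero] at this
  refine le_antisymm ?_ ?_
  · exact le_of_tendsto_of_tendsto (tendsto_avg_ell μ T A (dilMap m ⁻¹' C)) t1
      (hev.mono fun N h => h.1)
  · exact le_of_tendsto_of_tendsto (tendsto_avg_ell μ T A C) t2
      (hev.mono fun N h => h.2)

end SSAux

end

noncomputable section

open scoped ENNReal NNReal
open Filter TopologicalSpace

namespace SSAux

variable {X : Type*} [MeasurableSpace X] {μ : Measure X} {T : X → X} {A : Set X}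

/-- outer regularization of `ell` over clopen supersets. -/
def LL (μ : Measure X) (T : X → X) (A : Set X) (s : Set (ℤ → Bool)) : ℝ≥0∞ :=
  ⨅ C : {C : Set (ℤ → Bool) // IsClopen C ∧ s ⊆ C}, ell μ T A (C : Set (ℤ → Bool))

lemma LL_le_ell {s C : Set (ℤ → Bool)} (hC : IsClopen C) (hs : s ⊆ C) :
    LL μ T A s ≤ ell μ T A C := by
  unfold LL
  exact iInf_le (fun D : {C : Set (ℤ → Bool) // IsClopen C ∧ s ⊆ C} =>
    ell μ T A (D : Set (ℤ → Bool))) ⟨C, hC, hs⟩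

lemma ell_le_one [IsProbabilityMeasure μ] {C : Set (ℤ → Bool)} : ell μ T A C ≤ 1 :=
  ell_le_const fun _ _ => Mval_le_one

lemma LL_le_one [IsProbabilityMeasure μ] {s : Set (ℤ → Bool)} : LL μ T A s ≤ 1 :=
  le_trans (LL_le_ell isClopen_univ (Set.subset_univ s)) ell_le_one

lemma LL_ne_top [IsProbabilityMeasure μ] {s : Set (ℤ → Bool)} : LL μ T A s ≠ ∞ :=
  fun h => by simpa [h] using (LL_le_one (μ := μ) (T := T) (A := A) (s := s))

lemma LL_clopen [IsProbabilityMeasure μ] {C : Set (ℤ → Bool)} (hC : IsClopen C) :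
    LL μ T A C = ell μ T A C := by
  refine le_antisymm (LL_le_ell hC subset_rfl) (le_iInf fun D => ell_mono D.2.2)

lemma LL_mono {s t : Set (ℤ → Bool)} (h : s ⊆ t) : LL μ T A s ≤ LL μ T A t :=
  le_iInf fun D => LL_le_ell D.2.1 (h.trans D.2.2)

lemma LL_union_le [IsProbabilityMeasure μ] (hT : MeasurePreserving T μ μ)
    (hA : MeasurableSet A) {s t : Set (ℤ → Bool)} :
    LL μ T A (s ∪ t) ≤ LL μ T A s + LL μ T A t := by
  refine ENNReal.le_of_forall_pos_le_add fun ε hε _ => ?_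
  have hδ0 : (ε / 2 : ℝ≥0) ≠ 0 := by
    intro h
    rw [div_eq_zero_iff] at h
    rcases h with h | h
    · exact hε.ne' h
    · norm_num at h
  have hδ : ((ε / 2 : ℝ≥0) : ℝ≥0∞) ≠ 0 := by exact_mod_cast hδ0
  have h1 : LL μ T A s < LL μ T A s + (ε / 2 : ℝ≥0) :=
    ENNReal.lt_add_right LL_ne_top hδ
  have h2 : LL μ T A t < LL μ T A t + (ε / 2 : ℝ≥0) :=
    ENNReal.lt_add_right LL_ne_top hδ
  rw [LL, iInf_lt_iff] at h1 h2
  obtain ⟨⟨C₁, hC₁, hsC₁⟩, hlt₁⟩ := h1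
  obtain ⟨⟨C₂, hC₂, htC₂⟩, hlt₂⟩ := h2
  obtain ⟨r₁, hr₁⟩ := exists_deps_of_isClopen hC₁
  obtain ⟨r₂, hr₂⟩ := exists_deps_of_isClopen hC₂
  calc LL μ T A (s ∪ t) ≤ ell μ T A (C₁ ∪ C₂) :=
        LL_le_ell (hC₁.union hC₂) (Set.union_subset_union hsC₁ htC₂)
    _ ≤ ell μ T A C₁ + ell μ T A C₂ :=
        ell_union_le hT hA (isClopen_measurableSet hC₁) hr₁ (isClopen_measurableSet hC₂) hr₂
    _ ≤ (LL μ T A s + (ε / 2 : ℝ≥0)) + (LL μ T A t + (ε / 2 : ℝ≥0)) :=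
        add_le_add hlt₁.le hlt₂.le
    _ = LL μ T A s + LL μ T A t + (((ε / 2 : ℝ≥0) : ℝ≥0∞) + ((ε / 2 : ℝ≥0) : ℝ≥0∞)) := by ring
    _ = LL μ T A s + LL μ T A t + ε := by
        rw [← ENNReal.coe_add, add_halves]

lemma LL_union_disjoint [IsProbabilityMeasure μ] (hT : MeasurePreserving T μ μ)
    (hA : MeasurableSet A) {K₁ K₂ : Set (ℤ → Bool)} (h₁ : IsClosed K₁) (h₂ : IsClosed K₂)
    (hd : Disjoint K₁ K₂) :
    LL μ T A (K₁ ∪ K₂) = LL μ T A K₁ + LL μ T A K₂ := by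
  refine le_antisymm (LL_union_le hT hA) ?_
  obtain ⟨U, hU, hK₁U, hUK₂⟩ := exists_clopen_separation h₁ h₂ hd
  refine le_iInf fun ⟨C, hC, hsub⟩ => ?_
  have hC₁ : IsClopen (C ∩ U) := hC.inter hU
  have hC₂ : IsClopen (C ∩ Uᶜ) := hC.inter hU.compl
  obtain ⟨r₁, hr₁⟩ := exists_deps_of_isClopen hC₁
  obtain ⟨r₂, hr₂⟩ := exists_deps_of_isClopen hC₂
  have hunion : (C ∩ U) ∪ (C ∩ Uᶜ) = C := by
    rw [← Set.inter_union_distrib_left, Set.union_compl_self, Set.inter_univ]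
  have hdisj : Disjoint (C ∩ U) (C ∩ Uᶜ) :=
    Set.disjoint_of_subset Set.inter_subset_right Set.inter_subset_right
      disjoint_compl_right
  calc LL μ T A K₁ + LL μ T A K₂
      ≤ ell μ T A (C ∩ U) + ell μ T A (C ∩ Uᶜ) := by
        refine add_le_add (LL_le_ell hC₁ ?_) (LL_le_ell hC₂ ?_)
        · exact Set.subset_inter (Set.union_subset_iff.mp hsub).1 hK₁U
        · refine Set.subset_inter (Set.union_subset_iff.mp hsub).2 ?_
          exact Set.subset_compl_iff_disjoint_left.mpr hUK₂
    _ = ell μ T A ((C ∩ U) ∪ (C ∩ Uᶜ)) :=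
        (ell_add hT hA (isClopen_measurableSet hC₁) hr₁ (isClopen_measurableSet hC₂) hr₂
          hdisj).symm
    _ = ell μ T A C := by rw [hunion]

variable (μ T A) in
/-- The content on `{0,1}^ℤ` induced by `LL`. -/
def theContent [IsProbabilityMeasure μ] (hT : MeasurePreserving T μ μ)
    (hA : MeasurableSet A) : Content (ℤ → Bool) where
  toFun K := (LL μ T A K).toNNReal
  mono' K₁ K₂ h := by
    have := LL_mono (μ := μ) (T := T) (A := A) h
    exact ENNReal.toNNReal_mono LL_ne_top this
  sup_disjoint' K₁ K₂ hd h₁ h₂ := by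
    have heq : LL μ T A (↑(K₁ ⊔ K₂)) = LL μ T A K₁ + LL μ T A K₂ := by
      have : ((K₁ ⊔ K₂ : TopologicalSpace.Compacts (ℤ → Bool)) : Set (ℤ → Bool))
          = ↑K₁ ∪ ↑K₂ := rfl
      rw [this]
      exact LL_union_disjoint hT hA h₁ h₂ hd
    show (LL μ T A ↑(K₁ ⊔ K₂)).toNNReal
        = (LL μ T A ↑K₁).toNNReal + (LL μ T A ↑K₂).toNNReal
    rw [heq]
    exact ENNReal.toNNReal_add LL_ne_top LL_ne_top
  sup_le' K₁ K₂ := by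
    have hle : LL μ T A (↑(K₁ ⊔ K₂)) ≤ LL μ T A K₁ + LL μ T A K₂ := by
      have : ((K₁ ⊔ K₂ : TopologicalSpace.Compacts (ℤ → Bool)) : Set (ℤ → Bool))
          = ↑K₁ ∪ ↑K₂ := rfl
      rw [this]
      exact LL_union_le hT hA
    show (LL μ T A ↑(K₁ ⊔ K₂)).toNNReal
        ≤ (LL μ T A ↑K₁).toNNReal + (LL μ T A ↑K₂).toNNReal
    calc (LL μ T A (↑(K₁ ⊔ K₂))).toNNReal
        ≤ (LL μ T A K₁ + LL μ T A K₂).toNNReal :=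
          ENNReal.toNNReal_mono (by
            exact ENNReal.add_ne_top.mpr ⟨LL_ne_top, LL_ne_top⟩) hle
      _ = (LL μ T A K₁).toNNReal + (LL μ T A K₂).toNNReal :=
          ENNReal.toNNReal_add LL_ne_top LL_ne_top

variable (μ T A) in
/-- The strongly stationary measure. -/
def nuM [IsProbabilityMeasure μ] (hT : MeasurePreserving T μ μ) (hA : MeasurableSet A) :
    Measure (ℤ → Bool) :=
  (theContent μ T A hT hA).measure

lemma nuM_clopen [IsProbabilityMeasure μ] (hT : MeasurePreserving T μ μ)
    (hA : MeasurableSet A) {C : Set (ℤ → Bool)} (hC : IsClopen C) :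
    nuM μ T A hT hA C = ell μ T A C := by
  have hmeas : MeasurableSet C := isClopen_measurableSet hC
  rw [nuM, Content.measure_apply _ hmeas,
    Content.outerMeasure_of_isOpen _ C hC.isOpen,
    Content.innerContent_of_isCompact _ hC.isClosed.isCompact hC.isOpen]
  show ((LL μ T A C).toNNReal : ℝ≥0∞) = ell μ T A C
  rw [ENNReal.coe_toNNReal LL_ne_top, LL_clopen hC]

end SSAux

end

noncomputable section

open scoped ENNReal NNReal
open Filter

namespace SSAux

variable {X : Type*} [MeasurableSpace X] {μ : Measure X} {T : X → X} {A : Set X}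

lemma continuous_shiftMap : Continuous (shiftMap (Λ := Bool)) :=
  continuous_pi fun k => continuous_apply (k + 1)

lemma measurable_shiftMap : Measurable (shiftMap (Λ := Bool)) :=
  measurable_pi_lambda _ fun k => measurable_pi_apply _

lemma continuous_dilMap (n : ℕ) : Continuous (dilMap (Λ := Bool) n) :=
  continuous_pi fun i => continuous_apply ((n : ℤ) * i)

lemma measurable_dilMap (n : ℕ) : Measurable (dilMap (Λ := Bool) n) :=
  measurable_pi_lambda _ fun i => measurable_pi_apply _

lemma nuM_prob [IsProbabilityMeasure μ] (hT : MeasurePreserving T μ μ)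
    (hA : MeasurableSet A) : IsProbabilityMeasure (nuM μ T A hT hA) :=
  ⟨by rw [nuM_clopen hT hA isClopen_univ]; exact ell_univ⟩

lemma nuM_measurePreserving [IsProbabilityMeasure μ] (hT : MeasurePreserving T μ μ)
    (hA : MeasurableSet A) {f : (ℤ → Bool) → (ℤ → Bool)} (hfm : Measurable f)
    (hfc : Continuous f)
    (hell : ∀ C : Set (ℤ → Bool), IsClopen C → ell μ T A (f ⁻¹' C) = ell μ T A C) :
    MeasurePreserving f (nuM μ T A hT hA) (nuM μ T A hT hA) := by
  haveI hprob : IsProbabilityMeasure (nuM μ T A hT hA) := nuM_prob hT hA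
  refine ⟨hfm, ?_⟩
  haveI : IsProbabilityMeasure ((nuM μ T A hT hA).map f) :=
    Measure.isProbabilityMeasure_map hfm.aemeasurable
  refine MeasureTheory.ext_of_generate_finite _ pi_eq_generateFrom_isClopen
    isPiSystem_isClopen ?_ ?_
  · intro s hs
    rw [Measure.map_apply hfm (isClopen_measurableSet hs),
      nuM_clopen hT hA (hs.preimage hfc), hell s hs, nuM_clopen hT hA hs]
  · rw [measure_univ, measure_univ]

lemma nuM_stronglyStationary [IsProbabilityMeasure μ] (hT : MeasurePreserving T μ μ)
    (hA : MeasurableSet A) : IsStronglyStationary (nuM μ T A hT hA) := by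
  constructor
  · refine nuM_measurePreserving hT hA measurable_shiftMap continuous_shiftMap fun C hC => ?_
    obtain ⟨r, hr⟩ := exists_deps_of_isClopen hC
    exact ell_shift hT hA (isClopen_measurableSet hC) hr
  · intro n hn
    refine nuM_measurePreserving hT hA (measurable_dilMap n) (continuous_dilMap n) fun C hC => ?_
    obtain ⟨r, hr⟩ := exists_deps_of_isClopen hC
    exact ell_dil hT hA hn (isClopen_measurableSet hC) hr

lemma shiftMap_iterate (j : ℕ) (x : ℤ → Bool) (t : ℤ) : shiftMap^[j] x t = x (t + j) := by
  induction j generalizing x t with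
  | zero => simp [Function.iterate_zero_apply]
  | succ j ih =>
    rw [Function.iterate_succ_apply, ih]
    show x (t + j + 1) = x (t + (j + 1 : ℕ))
    congr 1
    push_cast
    ring

lemma ell_inter_le [IsProbabilityMeasure μ] (hT : MeasurePreserving T μ μ)
    (hA : MeasurableSet A) (k : ℕ) (n : ℕ+) :
    ell μ T A (⋂ i ∈ Finset.range (k + 1),
        shiftMap^[i * (n : ℕ)] ⁻¹' {x : ℤ → Bool | x 0 = true})
      ≤ ⨆ n' : ℕ+, μ (⋂ i ∈ Finset.range (k + 1), T^[i * (n' : ℕ)] ⁻¹' A) := by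
  refine ell_le_const fun q hq => ?_
  refine Filter.limsup_le_of_le (by isBoundedDefault) (Eventually.of_forall fun l => ?_)
  have hmeas : MeasurableSet (⋂ i ∈ Finset.range (k + 1), T^[i * (q * (n : ℕ))] ⁻¹' A) := by
    refine MeasurableSet.biInter (Set.to_countable _) fun i _ => ?_
    exact (hT.measurable.iterate _) hA
  have hpre : phiMap T A q l ⁻¹' (⋂ i ∈ Finset.range (k + 1),
        shiftMap^[i * (n : ℕ)] ⁻¹' {x : ℤ → Bool | x 0 = true})
      = T^[l] ⁻¹' (⋂ i ∈ Finset.range (k + 1), T^[i * (q * (n : ℕ))] ⁻¹' A) := by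
    ext x
    simp only [Set.mem_preimage, Set.mem_iInter]
    refine forall₂_congr fun i hi => ?_
    show shiftMap^[i * (n : ℕ)] (phiMap T A q l x) ∈ {x : ℤ → Bool | x 0 = true}
      ↔ T^[i * (q * (n : ℕ))] (T^[l] x) ∈ A
    rw [Set.mem_setOf_eq, shiftMap_iterate]
    show phiMap T A q l x (0 + (i * (n : ℕ) : ℕ)) = true ↔ _
    unfold phiMap
    rw [ebit_eq_true_iff]
    have hexp : ((q : ℤ) * (0 + (i * (n : ℕ) : ℕ)) + (l : ℤ))
        = ((i * (q * (n : ℕ)) + l : ℕ) : ℤ) := by push_cast; ring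
    rw [hexp]
    have h0 : (0 : ℤ) ≤ ((i * (q * (n : ℕ)) + l : ℕ) : ℤ) := by positivity
    simp only [h0, true_and, Int.toNat_natCast]
    rw [Function.iterate_add_apply]
  rw [mval, hpre, (hT.iterate l).measure_preimage hmeas.nullMeasurableSet]
  exact le_iSup_of_le (⟨q * (n : ℕ), by positivity⟩ : ℕ+) le_rfl

end SSAux

end

noncomputable section

/-- Every (not necessarily invertible) measure preserving probability system `(X, μ, T)`
and measurable set `A` is majorized by an invertible strongly stationary system — which
may be taken to be the shift on `{0,1}^ℤ` with a strongly stationary measure `ν` — with a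
set `B` satisfying `μ A = ν B` and, for every `k`,
`sup_{n ≥ 1} μ (⋂_{i=0}^k T^{-in} A) ≥ sup_{n ≥ 1} ν (⋂_{i=0}^k S^{-in} B)`. -/
theorem majorizes_strongly_stationary_system
    {X : Type*} [MeasurableSpace X] (μ : Measure X) [IsProbabilityMeasure μ]
    {T : X → X} (hT : MeasurePreserving T μ μ) {A : Set X} (hA : MeasurableSet A) :
    ∃ ν : Measure (ℤ → Bool), IsProbabilityMeasure ν ∧ IsStronglyStationary ν ∧
      ∃ B : Set (ℤ → Bool), MeasurableSet B ∧ μ A = ν B ∧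
        ∀ k : ℕ,
          (⨆ n : ℕ+, μ (⋂ i ∈ Finset.range (k + 1), T^[i * (n : ℕ)] ⁻¹' A))
            ≥ ⨆ n : ℕ+, ν (⋂ i ∈ Finset.range (k + 1), shiftMap^[i * (n : ℕ)] ⁻¹' B) := by
  have hBdeps : Deps {x : ℤ → Bool | x 0 = true} 0 := by
    intro x y hxy hx
    rw [Set.mem_setOf_eq, ← hxy 0 (by simp)]
    exact hx
  have hBclopen : IsClopen {x : ℤ → Bool | x 0 = true} := hBdeps.isClopen
  refine ⟨SSAux.nuM μ T A hT hA, SSAux.nuM_prob hT hA, SSAux.nuM_stronglyStationary hT hA,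
    {x : ℤ → Bool | x 0 = true}, isClopen_measurableSet hBclopen, ?_, ?_⟩
  · rw [SSAux.nuM_clopen hT hA hBclopen, SSAux.ell_base hT hA]
  · intro k
    rw [ge_iff_le]
    refine iSup_le fun n => ?_
    have hC : IsClopen (⋂ i ∈ Finset.range (k + 1),
        shiftMap^[i * (n : ℕ)] ⁻¹' {x : ℤ → Bool | x 0 = true}) :=
      isClopen_biInter_finset fun i _ => hBclopen.preimage (SSAux.continuous_shiftMap.iterate _)
    rw [SSAux.nuM_clopen hT hA hC]
    exact SSAux.ell_inter_le hT hA k n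

end
end

section
/- Let (X,𝓑,μ,T) be an extremal strongly stationary system with associated measure preserving maps {τ_n}_{n∈ℕ} satisfying τ_n T = T^n τ_n a.e. and τ_{mn} = τ_m τ_n. If A is a T-invariant set with μ(A) > 0, then the set ⋃_{n∈ℕ} τ_n^{-1}(A) has full measure. -/
open MeasureTheory Filter

noncomputable section

variable {X : Type*} [MeasurableSpace X]

/-- The `i`-th iterate (for `i : ℤ`) of an invertible map, given by the map `T` and
its inverse `T'`. -/
def zIter (T T' : X → X) (i : ℤ) : X → X :=
  if 0 ≤ i then T^[i.toNat] else T'^[(-i).toNat]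

/-- `𝓕` is an algebra of bounded measurable complex valued functions. -/
def IsFunAlg (𝓕 : Set (X → ℂ)) : Prop :=
  (∀ f ∈ 𝓕, Measurable f ∧ ∃ C : ℝ, ∀ x, ‖f x‖ ≤ C) ∧
  (∀ f ∈ 𝓕, ∀ g ∈ 𝓕, f + g ∈ 𝓕 ∧ f * g ∈ 𝓕) ∧
  (∀ c : ℂ, ∀ f ∈ 𝓕, c • f ∈ 𝓕) ∧ ((fun _ => (1 : ℂ)) ∈ 𝓕) ∧
  (∀ f ∈ 𝓕, (fun x => starRingEnd ℂ (f x)) ∈ 𝓕)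

/-- The σ-algebra `⋁_{i ∈ ℤ} T^i 𝓑(𝓕)` spanned by the functions `f ∘ T^i`, `f ∈ 𝓕`, `i ∈ ℤ`
(`T` invertible with inverse `T'`). -/
def genSigma (T T' : X → X) (𝓕 : Set (X → ℂ)) : MeasurableSpace X :=
  MeasurableSpace.generateFrom
    {s | ∃ f ∈ 𝓕, ∃ i : ℤ, ∃ U : Set ℂ, IsOpen U ∧ s = (fun x => f (zIter T T' i x)) ⁻¹' U}

/-- `𝓕` is `T`-generating: `⋁_{i ∈ ℤ} T^i 𝓑(𝓕) = 𝓑` up to `μ`-null sets. -/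
def IsGenerating (μ : Measure X) (T T' : X → X) (𝓕 : Set (X → ℂ)) : Prop :=
  ∀ s : Set X, MeasurableSet s →
    ∃ t : Set X, MeasurableSet[genSigma T T' 𝓕] t ∧ μ (symmDiff s t) = 0

/-- The strong stationarity identity:
`∫ f₀ · (f₁ ∘ T) ⋯ (f_k ∘ T^k) dμ = ∫ f₀ · (f₁ ∘ T^n) ⋯ (f_k ∘ T^{kn}) dμ`
for all `k, n ∈ ℕ`, `n ≥ 1`, and `f₀, …, f_k ∈ 𝓕`. -/
def SSIdentity (μ : Measure X) (T : X → X) (𝓕 : Set (X → ℂ)) : Prop :=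
  ∀ k n : ℕ, 0 < n → ∀ f : ℕ → X → ℂ, (∀ i ≤ k, f i ∈ 𝓕) →
    ∫ x, ∏ i ∈ Finset.range (k + 1), f i (T^[i] x) ∂μ =
    ∫ x, ∏ i ∈ Finset.range (k + 1), f i (T^[i * n] x) ∂μ

/-- A strongly stationary system: an invertible measure preserving system `(X, 𝓑, μ, T)`
(with inverse `T'`) together with a `T`-generating function algebra `𝓕` satisfying the
strong stationarity identity. -/
structure SSSystem (μ : Measure X) (T T' : X → X) (𝓕 : Set (X → ℂ)) : Prop where
  (measurable_T : Measurable T)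
  (measurable_T' : Measurable T')
  (measurePreserving : MeasurePreserving T μ μ)
  (leftInv : Function.LeftInverse T' T)
  (rightInv : Function.RightInverse T' T)
  (funAlg : IsFunAlg 𝓕)
  (generating : IsGenerating μ T T' 𝓕)
  (ssIdentity : SSIdentity μ T 𝓕)

/-- `ν` is the (two-sided) Bernoulli product measure on `Λ^ℤ` with marginal `ρ`. -/
def IsBernoulliMeasure {Λ : Type*} [MeasurableSpace Λ] (ρ : Measure Λ)
    (ν : Measure (ℤ → Λ)) : Prop :=
  ∀ (s : Finset ℤ) (A : ℤ → Set Λ), (∀ i, MeasurableSet (A i)) →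
    ν {x : ℤ → Λ | ∀ i ∈ s, x i ∈ A i} = ∏ i ∈ s, ρ (A i)

/-- Measure-theoretic isomorphism (mod 0) of measure preserving systems. -/
def IsMPIso {Y : Type*} [MeasurableSpace Y] (μ : Measure X) (T : X → X)
    (ν : Measure Y) (R : Y → Y) : Prop :=
  ∃ (φ : X → Y) (ψ : Y → X), MeasurePreserving φ μ ν ∧ MeasurePreserving ψ ν μ ∧
    (∀ᵐ x ∂μ, ψ (φ x) = x) ∧ (∀ᵐ y ∂ν, φ (ψ y) = y) ∧
    (∀ᵐ x ∂μ, φ (T x) = R (φ x))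

/-- Data of a two-sided Bernoulli shift: a state space `Λ`, a marginal probability `ρ`
and the corresponding product measure `bμ` on `Λ^ℤ`. -/
structure BernoulliShiftData where
  (Λ : Type)
  [mΛ : MeasurableSpace Λ]
  (ρ : Measure Λ)
  (bμ : Measure (ℤ → Λ))

attribute [instance] BernoulliShiftData.mΛ

/-- `(μ, T)` is (isomorphic to) a two-sided Bernoulli shift. -/
def IsBernoulliSystem (μ : Measure X) (T : X → X) : Prop :=
  ∃ B : BernoulliShiftData, IsProbabilityMeasure B.ρ ∧ IsProbabilityMeasure B.bμ ∧
    IsBernoulliMeasure B.ρ B.bμ ∧ IsMPIso μ T B.bμ shiftMap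

end

noncomputable section


section JenveyAux

open MeasureTheory Filter

variable {X : Type*} [MeasurableSpace X] {μ : MeasureTheory.Measure X}

lemma jenvey_aeComp {f : X → X} (hf : MeasurePreserving f μ μ) {p : X → Prop}
    (h : ∀ᵐ y ∂μ, p y) : ∀ᵐ x ∂μ, p (f x) :=
  ae_iff.mpr (hf.quasiMeasurePreserving.preimage_null (ae_iff.mp h))

lemma jenvey_preimageAE {f : X → X} (hf : MeasurePreserving f μ μ) {s t : Set X}
    (h : s =ᵐ[μ] t) : f ⁻¹' s =ᵐ[μ] f ⁻¹' t := by
  rw [eventuallyEq_set] at h ⊢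
  exact jenvey_aeComp hf h

lemma jenvey_diff_null_rev [IsFiniteMeasure μ] {s t : Set X}
    (hs : MeasurableSet s) (ht : MeasurableSet t)
    (h1 : μ (s \ t) = 0) (h2 : μ t ≤ μ s) : μ (t \ s) = 0 := by
  have e1 : μ (s ∩ t) + μ (s \ t) = μ s := measure_inter_add_diff s ht
  have e2 : μ (t ∩ s) + μ (t \ s) = μ t := measure_inter_add_diff t hs
  rw [h1, add_zero] at e1
  have h3 : μ (t ∩ s) + μ (t \ s) ≤ μ (t ∩ s) + 0 := by
    rw [add_zero, e2, Set.inter_comm t s, e1]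
    exact h2
  have := (ENNReal.add_le_add_iff_left (measure_ne_top μ (t ∩ s))).mp h3
  exact le_antisymm this zero_le

end JenveyAux

/-- Let `(X, 𝓑, μ, T)` be an *extremal* strongly stationary system (the joint action of
`T` and the Jenvey maps `τ_n` is ergodic), with `τ_n` measure preserving, fixing `𝓕`,
satisfying `T ∘ τ_n = τ_n ∘ T^n` a.e. and `τ_{mn} = τ_m ∘ τ_n`. If `A` is a `T`-invariant
set (mod `μ`) of positive measure, then `⋃_{n ≥ 1} τ_n⁻¹ A` has full measure. -/
theorem extremal_union_tau_preimages_full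
    {X : Type*} [MeasurableSpace X] (μ : Measure X) [IsProbabilityMeasure μ]
    (T T' : X → X) (𝓕 : Set (X → ℂ)) (hss : SSSystem μ T T' 𝓕)
    (τ : ℕ → X → X)
    (hτmp : ∀ n : ℕ, 0 < n → MeasurePreserving (τ n) μ μ)
    (hτfix : ∀ n : ℕ, 0 < n → ∀ f ∈ 𝓕, ∀ᵐ x ∂μ, f (τ n x) = f x)
    (hτcomm : ∀ n : ℕ, 0 < n → ∀ᵐ x ∂μ, T (τ n x) = τ n (T^[n] x))
    (hτmul : ∀ m n : ℕ, 0 < m → 0 < n → τ (m * n) = τ m ∘ τ n)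
    (hext : ∀ B : Set X, MeasurableSet B → μ (symmDiff (T ⁻¹' B) B) = 0 →
      (∀ n : ℕ, 0 < n → μ (symmDiff (τ n ⁻¹' B) B) = 0) → μ B = 0 ∨ μ B = 1)
    (A : Set X) (hA : MeasurableSet A)
    (hinv : μ (symmDiff (T ⁻¹' A) A) = 0) (hpos : 0 < μ A) :
    μ (⋃ (n : ℕ) (_ : 0 < n), τ n ⁻¹' A) = 1 := by
  classical
  have hT : MeasurePreserving T μ μ := hss.measurePreserving
  have hTk : ∀ k : ℕ, MeasurePreserving (T^[k]) μ μ := hT.iterate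
  -- iterated commutation: T^[j] ∘ τ m = τ m ∘ T^[j*m] a.e.
  have hcomm : ∀ m : ℕ, 0 < m → ∀ j : ℕ,
      ∀ᵐ x ∂μ, T^[j] (τ m x) = τ m (T^[j * m] x) := by
    intro m hm j
    induction j with
    | zero => filter_upwards with x; simp
    | succ j ih =>
      have h2 : ∀ᵐ x ∂μ, T^[j] (τ m (T^[m] x)) = τ m (T^[j * m] (T^[m] x)) :=
        jenvey_aeComp (hTk m) ih
      filter_upwards [hτcomm m hm, h2] with x e1 e2
      calc T^[j + 1] (τ m x) = T^[j] (T (τ m x)) := Function.iterate_succ_apply T j (τ m x)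
        _ = T^[j] (τ m (T^[m] x)) := by rw [e1]
        _ = τ m (T^[j * m] (T^[m] x)) := e2
        _ = τ m (T^[(j + 1) * m] x) := by
            rw [← Function.iterate_add_apply, Nat.succ_mul]
  -- swap preimages
  have hswap : ∀ m : ℕ, 0 < m → ∀ j : ℕ, ∀ S : Set X,
      τ m ⁻¹' (T^[j] ⁻¹' S) =ᵐ[μ] T^[j * m] ⁻¹' (τ m ⁻¹' S) := by
    intro m hm j S
    rw [eventuallyEq_set]
    filter_upwards [hcomm m hm j] with x hx
    simp only [Set.mem_preimage, hx]
  -- A is invariant under all iterates of T, mod μ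
  have hAae : T ⁻¹' A =ᵐ[μ] A := measure_symmDiff_eq_zero_iff.mp hinv
  have hAk : ∀ k : ℕ, T^[k] ⁻¹' A =ᵐ[μ] A := by
    intro k
    induction k with
    | zero => simp; exact EventuallyEq.rfl
    | succ k ih =>
      have e0 : (T^[k + 1]) ⁻¹' A = T^[k] ⁻¹' (T ⁻¹' A) := by
        rw [Function.iterate_succ']; rfl
      rw [e0]
      exact (jenvey_preimageAE (hTk k) hAae).trans ih
  -- the sets C n = τ n ⁻¹' A and B
  set C : ℕ → Set X := fun n => τ n ⁻¹' A with hCdef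
  have hCm : ∀ n, 0 < n → MeasurableSet (C n) := fun n hn => (hτmp n hn).measurable hA
  set B : Set X := ⋃ (n : ℕ) (_ : 0 < n), τ n ⁻¹' A with hBdef
  have hBm : MeasurableSet B :=
    MeasurableSet.iUnion fun n => MeasurableSet.iUnion fun hn => (hτmp n hn).measurable hA
  have hCB : ∀ n, 0 < n → C n ⊆ B := fun n hn =>
    Set.subset_iUnion₂ (s := fun (i : ℕ) (_ : 0 < i) => τ i ⁻¹' A) n hn
  -- B is τ-invariant
  have hτBsub : ∀ m, 0 < m → τ m ⁻¹' B ⊆ B := by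
    intro m hm x hx
    simp only [hBdef, Set.mem_preimage, Set.mem_iUnion] at hx ⊢
    obtain ⟨n, hn, hxn⟩ := hx
    refine ⟨n * m, Nat.mul_pos hn hm, ?_⟩
    rw [hτmul n m hn hm]
    exact hxn
  have hτBae : ∀ m, 0 < m → τ m ⁻¹' B =ᵐ[μ] B := fun m hm =>
    ae_eq_of_subset_of_measure_ge (hτBsub m hm)
      (((hτmp m hm).measure_preimage hBm.nullMeasurableSet).symm.le)
      ((hτmp m hm).measurable hBm).nullMeasurableSet (measure_ne_top μ B)
  -- C n is T^n-invariant mod μ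
  have hCinv : ∀ n, 0 < n → ∀ k : ℕ, T^[k * n] ⁻¹' C n =ᵐ[μ] C n := by
    intro n hn k
    exact (hswap n hn k A).symm.trans (jenvey_preimageAE (hτmp n hn) (hAk k))
  -- the saturated set D
  set D : Set X := ⋃ j : ℕ, T^[j] ⁻¹' B with hDdef
  have hDm : MeasurableSet D := MeasurableSet.iUnion fun j => (hTk j).measurable hBm
  have hBD : B ⊆ D := by
    intro x hx
    exact Set.mem_iUnion.mpr ⟨0, by simpa using hx⟩
  have hTD : T ⁻¹' D ⊆ D := by
    intro x hx
    simp only [hDdef, Set.mem_preimage, Set.mem_iUnion] at hx ⊢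
    obtain ⟨j, hj⟩ := hx
    exact ⟨j + 1, by rw [Function.iterate_succ_apply]; exact hj⟩
  -- D is T-invariant mod μ
  have hTDdiff : μ (T ⁻¹' D \ D) = 0 := by
    rw [Set.diff_eq_empty.mpr hTD]; exact measure_empty
  have hTDnull : μ (symmDiff (T ⁻¹' D) D) = 0 := by
    rw [Set.symmDiff_def]
    refine measure_union_null hTDdiff ?_
    exact jenvey_diff_null_rev (hT.measurable hDm) hDm hTDdiff
      (hT.measure_preimage hDm.nullMeasurableSet).symm.le
  -- D is τ-invariant mod μ
  have hτDnull : ∀ m, 0 < m → μ (symmDiff (τ m ⁻¹' D) D) = 0 := by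
    intro m hm
    have h1 : μ (τ m ⁻¹' D \ D) = 0 := by
      have hsub : τ m ⁻¹' D \ D ⊆ ⋃ j : ℕ, (τ m ⁻¹' (T^[j] ⁻¹' B) \ D) := by
        intro x hx
        rcases Set.mem_iUnion.mp hx.1 with ⟨j, hj⟩
        exact Set.mem_iUnion.mpr ⟨j, hj, hx.2⟩
      refine measure_mono_null hsub (measure_iUnion_null fun j => ?_)
      have e : τ m ⁻¹' (T^[j] ⁻¹' B) =ᵐ[μ] T^[j * m] ⁻¹' B :=
        (hswap m hm j B).trans (jenvey_preimageAE (hTk (j * m)) (hτBae m hm))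
      have hsub2 : T^[j * m] ⁻¹' B ⊆ D := Set.subset_iUnion (fun i : ℕ => T^[i] ⁻¹' B) (j * m)
      calc μ (τ m ⁻¹' (T^[j] ⁻¹' B) \ D)
          = μ (T^[j * m] ⁻¹' B \ D) := measure_congr (e.diff (EventuallyEq.refl _ _))
        _ = 0 := by rw [Set.diff_eq_empty.mpr hsub2]; exact measure_empty
    rw [Set.symmDiff_def]
    refine measure_union_null h1 ?_
    exact jenvey_diff_null_rev ((hτmp m hm).measurable hDm) hDm h1
      ((hτmp m hm).measure_preimage hDm.nullMeasurableSet).symm.le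
  -- μ D = 1 by extremality
  have hC1 : μ (C 1) = μ A := (hτmp 1 one_pos).measure_preimage hA.nullMeasurableSet
  have hDpos : 0 < μ D := by
    calc (0 : ENNReal) < μ A := hpos
      _ = μ (C 1) := hC1.symm
      _ ≤ μ B := measure_mono (hCB 1 one_pos)
      _ ≤ μ D := measure_mono hBD
  have hD1 : μ D = 1 := (hext D hDm hTDnull hτDnull).resolve_left hDpos.ne'
  -- finite approximations of B
  set Bf : ℕ → Set X := fun r => ⋃ n ∈ Finset.Icc 1 r, C n with hBfdef
  have hBfm : ∀ r, MeasurableSet (Bf r) := by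
    intro r
    refine Finset.measurableSet_biUnion _ (fun n hn => hCm n ?_)
    exact (Finset.mem_Icc.mp hn).1
  have hBfsub : ∀ r, Bf r ⊆ B := by
    intro r x hx
    rcases Set.mem_iUnion₂.mp hx with ⟨n, hn, hxn⟩
    exact hCB n (Finset.mem_Icc.mp hn).1 hxn
  have hBfmono : Monotone Bf := by
    intro r r' hrr' x hx
    rcases Set.mem_iUnion₂.mp hx with ⟨n, hn, hxn⟩
    rcases Finset.mem_Icc.mp hn with ⟨h1, h2⟩
    exact Set.mem_iUnion₂.mpr ⟨n, Finset.mem_Icc.mpr ⟨h1, h2.trans hrr'⟩, hxn⟩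
  have hBfUnion : (⋃ r : ℕ, Bf r) = B := by
    apply Set.Subset.antisymm
    · exact Set.iUnion_subset hBfsub
    · intro x hx
      simp only [hBdef, Set.mem_iUnion] at hx
      rcases hx with ⟨n, hn, hxn⟩
      exact Set.mem_iUnion.mpr ⟨n, Set.mem_iUnion₂.mpr ⟨n, Finset.mem_Icc.mpr ⟨hn, le_refl n⟩, hxn⟩⟩
  -- Bf r is T^(j * r!)-invariant mod μ
  have hBfinv : ∀ r j : ℕ, T^[j * r.factorial] ⁻¹' Bf r =ᵐ[μ] Bf r := by
    intro r j
    rw [eventuallyEq_set]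
    have hall : ∀ᵐ x ∂μ, ∀ n ∈ Finset.Icc 1 r,
        (x ∈ T^[j * r.factorial] ⁻¹' C n ↔ x ∈ C n) := by
      rw [eventually_all_finset]
      intro n hn
      rcases Finset.mem_Icc.mp hn with ⟨h1, h2⟩
      obtain ⟨d, hd⟩ : n ∣ j * r.factorial := Dvd.dvd.mul_left (Nat.dvd_factorial h1 h2) j
      have e : j * r.factorial = d * n := by rw [hd, Nat.mul_comm]
      rw [e]
      exact eventuallyEq_set.mp (hCinv n h1 d)
    filter_upwards [hall] with x hx
    simp only [hBfdef, Set.mem_preimage, Set.mem_iUnion, exists_prop]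
    constructor
    · rintro ⟨n, hn, h⟩; exact ⟨n, hn, (hx n hn).mp h⟩
    · rintro ⟨n, hn, h⟩; exact ⟨n, hn, (hx n hn).mpr h⟩
  -- dilation invariance of the defect
  have dil : ∀ j m : ℕ, 0 < m → μ (T^[j] ⁻¹' B \ B) = μ (T^[j * m] ⁻¹' B \ B) := by
    intro j m hm
    have e1 : τ m ⁻¹' (T^[j] ⁻¹' B) =ᵐ[μ] T^[j * m] ⁻¹' B :=
      (hswap m hm j B).trans (jenvey_preimageAE (hTk (j * m)) (hτBae m hm))
    have e : τ m ⁻¹' (T^[j] ⁻¹' B \ B) =ᵐ[μ] T^[j * m] ⁻¹' B \ B := by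
      rw [Set.preimage_diff]
      exact e1.diff (hτBae m hm)
    have hmp : μ (τ m ⁻¹' (T^[j] ⁻¹' B \ B)) = μ (T^[j] ⁻¹' B \ B) :=
      (hτmp m hm).measure_preimage (((hTk j).measurable hBm).diff hBm).nullMeasurableSet
    rw [← hmp]
    exact measure_congr e
  -- bound on the defect
  have bnd : ∀ j : ℕ, ∀ r : ℕ, 0 < j → μ (T^[j] ⁻¹' B \ B) ≤ μ (B \ Bf r) := by
    intro j r hj
    rw [dil j r.factorial r.factorial_pos]
    have hinvf := hBfinv r j
    have split : T^[j * r.factorial] ⁻¹' B \ B ⊆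
        (T^[j * r.factorial] ⁻¹' (B \ Bf r)) ∪ (T^[j * r.factorial] ⁻¹' (Bf r) \ Bf r) := by
      intro x hx
      by_cases hxf : x ∈ T^[j * r.factorial] ⁻¹' (Bf r)
      · exact Or.inr ⟨hxf, fun hc => hx.2 (hBfsub r hc)⟩
      · exact Or.inl ⟨hx.1, fun hc => hxf hc⟩
    refine le_trans (measure_mono split) (le_trans (measure_union_le _ _) ?_)
    have z : μ (T^[j * r.factorial] ⁻¹' (Bf r) \ Bf r) = 0 := (ae_eq_set.mp hinvf).1
    rw [z, add_zero]
    exact ((hTk (j * r.factorial)).measure_preimage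
      (hBm.diff (hBfm r)).nullMeasurableSet).le
  -- the defect vanishes
  have key : ∀ j : ℕ, μ (T^[j] ⁻¹' B \ B) = 0 := by
    intro j
    rcases Nat.eq_zero_or_pos j with h | hj
    · subst h; simp
    · have hanti : Antitone fun r : ℕ => B \ Bf r := fun r r' hrr' =>
        Set.diff_subset_diff_right (hBfmono hrr')
      have hiInter : (⋂ r : ℕ, B \ Bf r) = ∅ := by
        rw [← Set.diff_iUnion, hBfUnion, Set.diff_self]
      have htends : Tendsto (fun r : ℕ => μ (B \ Bf r)) atTop (nhds 0) := by
        have := tendsto_measure_iInter_atTop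
          (fun r : ℕ => (hBm.diff (hBfm r)).nullMeasurableSet) hanti
          ⟨0, measure_ne_top μ _⟩
        rw [hiInter, measure_empty] at this
        exact this
      have hle : μ (T^[j] ⁻¹' B \ B) ≤ 0 := ge_of_tendsto' htends (fun r => bnd j r hj)
      exact le_antisymm hle zero_le
  -- conclude
  have hDB : μ (D \ B) = 0 := by
    have hsub : D \ B ⊆ ⋃ j : ℕ, (T^[j] ⁻¹' B \ B) := by
      intro x hx
      rcases Set.mem_iUnion.mp hx.1 with ⟨j, hj⟩
      exact Set.mem_iUnion.mpr ⟨j, hj, hx.2⟩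
    exact measure_mono_null hsub (measure_iUnion_null key)
  have hDle : μ D ≤ μ B := by
    calc μ D ≤ μ (B ∪ (D \ B)) := measure_mono (by
          intro x hx
          by_cases h : x ∈ B
          exacts [Or.inl h, Or.inr ⟨hx, h⟩])
      _ ≤ μ B + μ (D \ B) := measure_union_le _ _
      _ = μ B := by rw [hDB, add_zero]
  exact le_antisymm prob_le_one (hD1 ▸ hDle)


end
end
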